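/- arXiv:1609.03625 — 3 statements merged into one kernel-verified Lean document; each statement's English description precedes it below -/
import Mathlib

section
/- Let Ω ⊂ ℝⁿ be an open set, let 𝒦 be a mesh of Ω of size δ = sup_{K∈𝒦} diam K, and let {(x_K, m_K, P_K)}_{K∈𝒦} ⊂ ℝⁿ × ℝ₊ × G_{d,n} with x_K ∈ K for all K. Define V^{vol}_𝒦 = Σ_{K∈𝒦} (m_K/|K|) ℒⁿ⌞K ⊗ δ_{P_K} and V^{pt}_𝒦 = Σ_{K∈𝒦} m_K δ_{x_K} ⊗ δ_{P_K}. Then for every open set U ⊂ Ω, Δ^{1,1}_U(V^{vol}_𝒦, V^{pt}_𝒦) ≤ δ · min(‖V^{vol}_𝒦‖(U^δ), ‖V^{pt}_𝒦‖(U^δ)), where U^δ is the open δ-neighborhood of U. -/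
open MeasureTheory Filter Metric Set Function
open scoped ENNReal NNReal RealInnerProductSpace Topology Pointwise

noncomputable section

namespace VarifoldPaper

abbrev Euc (n : ℕ) := EuclideanSpace ℝ (Fin n)
abbrev CLM (n : ℕ) := Euc n →L[ℝ] Euc n

def Gr (n d : ℕ) : Type :=
  {P : CLM n // LinearMap.IsSymmetric (P : Euc n →ₗ[ℝ] Euc n) ∧ P.comp P = P ∧
    Module.finrank ℝ (LinearMap.range (P : Euc n →ₗ[ℝ] Euc n)) = d}

instance (n d : ℕ) : MetricSpace (Gr n d) := by unfold Gr; infer_instance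
instance (n d : ℕ) : MeasurableSpace (Gr n d) := borel _
instance (n d : ℕ) : BorelSpace (Gr n d) := ⟨rfl⟩

def Gr.op {n d : ℕ} (P : Gr n d) : CLM n := Subtype.val P

def Gr.plane {n d : ℕ} (P : Gr n d) : Set (Euc n) :=
  (LinearMap.range ((Gr.op P : CLM n) : Euc n →ₗ[ℝ] Euc n) : Submodule ℝ (Euc n))

/-- The mass `‖V‖` of a `d`-varifold: the pushforward of `V` on the spatial factor. -/
def mass {n d : ℕ} (V : Measure (Euc n × Gr n d)) : Measure (Euc n) :=
  V.map Prod.fst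

/-- Tangential divergence `div_P X (x) = ∑ⱼ ⟨P(∇Xⱼ(x)), eⱼ⟩`. -/
def sdiv {n d : ℕ} (P : Gr n d) (X : Euc n → Euc n) (x : Euc n) : ℝ :=
  ∑ j : Fin n, EuclideanSpace.proj j (Gr.op P (gradient (fun y => EuclideanSpace.proj j (X y)) x))

/-- The first variation `δV(X) = ∫ div_S X dV` of a varifold. -/
def firstVar {n d : ℕ} (V : Measure (Euc n × Gr n d)) (X : Euc n → Euc n) : ℝ :=
  ∫ p, sdiv p.2 X p.1 ∂V

/-- The (vector-valued) first variation applied to a scalar function,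
`δV(g) = ∫ ∇^S g dV = (δV(g e₁),…,δV(g eₙ))`. -/
def firstVarScalar {n d : ℕ} (V : Measure (Euc n × Gr n d)) (g : Euc n → ℝ) : Euc n :=
  ∫ p, Gr.op p.2 (gradient g p.1) ∂V

/-- `X` is of class `C¹` with compact support. -/
def C1c {n : ℕ} (X : Euc n → Euc n) : Prop := ContDiff ℝ 1 X ∧ HasCompactSupport X

/-- Sup norm of a vector field. -/
def supNorm {n : ℕ} (X : Euc n → Euc n) : ℝ := ⨆ x, ‖X x‖

/-- `C¹` norm of a vector field. -/
def C1norm {n : ℕ} (X : Euc n → Euc n) : ℝ := (⨆ x, ‖X x‖) + ⨆ x, ‖fderiv ℝ X x‖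

/-- The rescaled radial kernel `x ↦ ε^{-n} ρ(|x|/ε)` on `ℝⁿ`. -/
def keps (n : ℕ) (ρ : ℝ → ℝ) (ε : ℝ) : Euc n → ℝ := fun x => (ε ^ n)⁻¹ * ρ (‖x‖ / ε)

/-- The regularized first variation `δV ∗ ρ_ε (x) = ∫ ∇^S ρ_ε(y-x) dV(y,S)`. -/
def regFV {n d : ℕ} (ρ : ℝ → ℝ) (ε : ℝ) (V : Measure (Euc n × Gr n d)) (x : Euc n) : Euc n :=
  ∫ p, Gr.op p.2 (gradient (keps n ρ ε) (p.1 - x)) ∂V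

/-- The regularized mass `‖V‖ ∗ ξ_ε(x)`. -/
def massConv {n d : ℕ} (ξ : ℝ → ℝ) (ε : ℝ) (V : Measure (Euc n × Gr n d)) (x : Euc n) : ℝ :=
  ∫ y, keps n ξ ε (x - y) ∂(mass V)

/-- `ω_d`, the volume of the unit ball of `ℝ^d`. -/
def ballVol (d : ℕ) : ℝ := (volume (Metric.ball (0 : Euc d) 1)).toReal

/-- The constant `C_ρ = d ω_d ∫₀¹ ρ(r) r^{d-1} dr`. -/
def Ckern (d : ℕ) (ρ : ℝ → ℝ) : ℝ := d * ballVol d * ∫ r in Ioo (0:ℝ) 1, ρ r * r ^ (d - 1)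

/-- The approximate mean curvature
`H_{ρ,ξ,ε}^V(x) = -(C_ξ/C_ρ) (δV ∗ ρ_ε(x)) / (‖V‖ ∗ ξ_ε(x))`. -/
def AMC {n d : ℕ} (ρ ξ : ℝ → ℝ) (ε : ℝ) (V : Measure (Euc n × Gr n d)) (x : Euc n) : Euc n :=
  ((-(Ckern d ξ / Ckern d ρ)) / massConv ξ ε V x) • regFV ρ ε V x

/-- Average of the projections `Π_{P^⊥} v` with respect to a measure `ν` on the Grassmannian. -/
def perpAvg {n d : ℕ} (ν : Measure (Gr n d)) (v : Euc n) : Euc n :=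
  ∫ P, (v - Gr.op P v) ∂ν

/-- Orthogonal approximate mean curvature, for a varifold with disintegration `ν`. -/
def AMCperpOf {n d : ℕ} (ν : Euc n → Measure (Gr n d)) (ρ ξ : ℝ → ℝ) (ε : ℝ)
    (V : Measure (Euc n × Gr n d)) (x : Euc n) : Euc n :=
  perpAvg (ν x) (AMC ρ ξ ε V x)

/-- Orthogonal approximate mean curvature of a rectifiable varifold with tangent map `tg`
(whose disintegration is `ν_x = δ_{tg x}`). -/
def AMCperpRect {n d : ℕ} (tg : Euc n → Gr n d) (ρ ξ : ℝ → ℝ) (ε : ℝ)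
    (V : Measure (Euc n × Gr n d)) (x : Euc n) : Euc n :=
  AMC ρ ξ ε V x - Gr.op (tg x) (AMC ρ ξ ε V x)

/-- Localized bounded Lipschitz distance `Δ^{1,1}_U` between two varifolds. -/
def BL {n d : ℕ} (U : Set (Euc n)) (V W : Measure (Euc n × Gr n d)) : ℝ :=
  sSup {r : ℝ | ∃ φ : Euc n × Gr n d → ℝ, LipschitzWith 1 φ ∧ (∀ p, |φ p| ≤ 1) ∧
    tsupport φ ⊆ U ×ˢ (univ : Set (Gr n d)) ∧ r = |(∫ p, φ p ∂V) - ∫ p, φ p ∂W|}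

/-- Localized bounded Lipschitz distance `Δ^{1,1}_U` between two measures on `ℝⁿ`. -/
def BLm {n : ℕ} (U : Set (Euc n)) (μ ν : Measure (Euc n)) : ℝ :=
  sSup {r : ℝ | ∃ φ : Euc n → ℝ, LipschitzWith 1 φ ∧ (∀ x, |φ x| ≤ 1) ∧
    tsupport φ ⊆ U ∧ r = |(∫ x, φ x ∂μ) - ∫ x, φ x ∂ν|}

/-- Support of a measure. -/
def msupp {n : ℕ} (μ : Measure (Euc n)) : Set (Euc n) :=
  {x | ∀ r : ℝ, 0 < r → μ (Metric.ball x r) ≠ 0}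

/-- The `W^{1,∞}` norm of a (Lipschitz) profile. -/
def W1norm (ξ : ℝ → ℝ) : ℝ :=
  (⨆ s, |ξ s|) + sInf {L : ℝ | 0 ≤ L ∧ LipschitzWith (Real.toNNReal L) ξ}

/-- The `W^{2,∞}` norm of a (`C^{1,1}`) profile. -/
def W2norm (ρ : ℝ → ℝ) : ℝ :=
  (⨆ s, |ρ s|) + (⨆ s, |deriv ρ s|) +
    sInf {L : ℝ | 0 ≤ L ∧ LipschitzWith (Real.toNNReal L) (deriv ρ)}

/-- A kernel profile as in the paper: even, non-negative, supported in `[-1,1]`, with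
`∫_{ℝⁿ} ρ(|x|) dx = 1`. -/
structure IsProfile (n : ℕ) (ρ : ℝ → ℝ) : Prop where
  nonneg : ∀ s, 0 ≤ ρ s
  even : ∀ s, ρ (-s) = ρ s
  compact_supp : ∀ s : ℝ, 1 ≤ |s| → ρ s = 0
  normalized : ∫ x : Euc n, ρ ‖x‖ = 1

/-- Hypothesis 4.1 of the paper: kernel profiles with `ρ ∈ W^{2,∞}` (i.e. `C¹` with Lipschitz
derivative) and `ξ ∈ W^{1,∞}` (i.e. Lipschitz). -/
def Hyp41 (n : ℕ) (ρ ξ : ℝ → ℝ) : Prop :=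
  IsProfile n ρ ∧ IsProfile n ξ ∧ ContDiff ℝ 1 ρ ∧
    (∃ L : ℝ≥0, LipschitzWith L (deriv ρ)) ∧ ∃ L : ℝ≥0, LipschitzWith L ξ

/-- `V` has bounded first variation: `δV` extends to a bounded vector-valued Radon measure,
equivalently `δV` is bounded w.r.t. the sup norm. -/
def BoundedFV {n d : ℕ} (V : Measure (Euc n × Gr n d)) : Prop :=
  ∃ C : ℝ, ∀ X : Euc n → Euc n, C1c X → |firstVar V X| ≤ C * supNorm X

/-- `V` has locally bounded first variation. -/
def LocBoundedFV {n d : ℕ} (V : Measure (Euc n × Gr n d)) : Prop :=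
  ∀ Kc : Set (Euc n), IsCompact Kc → ∃ C : ℝ, ∀ X : Euc n → Euc n, C1c X →
    tsupport X ⊆ Kc → |firstVar V X| ≤ C * supNorm X

/-- `H` is the generalized mean curvature of `V`: `δV = -H ‖V‖ + δV_s` with
`δV_s = g σ` singular with respect to `‖V‖`. -/
def HasGMC {n d : ℕ} (V : Measure (Euc n × Gr n d)) (H : Euc n → Euc n) : Prop :=
  LocallyIntegrable H (mass V) ∧
  ∃ (σ : Measure (Euc n)) (g : Euc n → Euc n), σ.MutuallySingular (mass V) ∧
    IsLocallyFiniteMeasure σ ∧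
    ∀ X : Euc n → Euc n, C1c X →
      firstVar V X = -(∫ x, ⟪X x, H x⟫ ∂(mass V)) + ∫ x, ⟪X x, g x⟫ ∂σ

/-- `M ⊆ ℝⁿ` is countably `d`-rectifiable: up to an `𝓗^d`-null set, `M` is covered by countably
many Lipschitz images of subsets of `ℝ^d`. -/
def CountablyRectifiable (n d : ℕ) (M : Set (Euc n)) : Prop :=
  ∃ (f : ℕ → (EuclideanSpace ℝ (Fin d) → Euc n)) (s : ℕ → Set (EuclideanSpace ℝ (Fin d)))
    (L : ℕ → ℝ≥0), (∀ i, LipschitzOnWith (L i) (f i) (s i)) ∧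
      (μH[(d : ℝ)] : Measure (Euc n)) (M \ ⋃ i, f i '' s i) = 0

/-- `T` is the approximate tangent plane of `μ` at `x` with multiplicity `θx`: the blow-ups of
`μ` at `x` converge weakly-∗ to `θx 𝓗^d ⌞ T`. -/
def ApproxTangentAt {n d : ℕ} (μ : Measure (Euc n)) (x : Euc n) (θx : ℝ) (T : Gr n d) : Prop :=
  ∀ φ : Euc n → ℝ, Continuous φ → HasCompactSupport φ →
    Tendsto (fun ε : ℝ => (ε ^ d)⁻¹ * ∫ y, φ (ε⁻¹ • (y - x)) ∂μ) (𝓝[>] (0:ℝ))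
      (𝓝 (θx * ∫ y in Gr.plane T, φ y ∂(μH[(d : ℝ)] : Measure (Euc n))))

/-- `V` is the rectifiable `d`-varifold `v(M,θ)` with tangent map `tg`. -/
def IsRectVarifold {n d : ℕ} (V : Measure (Euc n × Gr n d)) (M : Set (Euc n))
    (θ : Euc n → ℝ) (tg : Euc n → Gr n d) : Prop :=
  Measurable θ ∧ Measurable tg ∧ CountablyRectifiable n d M ∧
  (∀ᵐ x ∂((μH[(d : ℝ)] : Measure (Euc n)).restrict M), 0 < θ x) ∧
  (∀ᵐ x ∂((μH[(d : ℝ)] : Measure (Euc n)).restrict M), ApproxTangentAt (mass V) x (θ x) (tg x)) ∧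
  V = ((((μH[(d : ℝ)] : Measure (Euc n)).restrict M).withDensity
        (fun x => ENNReal.ofReal (θ x))).map (fun x => (x, tg x)))

/-- `W` is a point cloud varifold subordinate to the mesh `K`. -/
def IsPointCloudOn {n d : ℕ} {ι : Type} (K : ι → Set (Euc n))
    (W : Measure (Euc n × Gr n d)) : Prop :=
  ∃ (m : ι → ℝ≥0) (xp : ι → Euc n) (P : ι → Gr n d),
    (∀ k, (K k).Nonempty → xp k ∈ K k) ∧ (∀ k, K k = ∅ → m k = 0) ∧
    W = Measure.sum (fun k => (m k : ℝ≥0∞) • Measure.dirac (xp k, P k))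

/-- `W` is a discrete volumetric varifold subordinate to the mesh `K`. -/
def IsVolumetricOn {n d : ℕ} {ι : Type} (K : ι → Set (Euc n))
    (W : Measure (Euc n × Gr n d)) : Prop :=
  ∃ (m : ι → ℝ≥0) (P : ι → Gr n d),
    W = Measure.sum (fun k =>
      ((m k : ℝ≥0∞) / volume (K k)) • ((volume.restrict (K k)).map (fun x => (x, P k))))

/-- Cotangent of the angle between two vectors. -/
def myCot (u v : Euc 3) : ℝ :=
  ⟪u, v⟫ / Real.sqrt (‖u‖ ^ 2 * ‖v‖ ^ 2 - ⟪u, v⟫ ^ 2)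

lemma aux_mem_thickening {n : ℕ} {U : Set (Euc n)} {x y : Euc n} {r δ : ℝ}
    (hr : 0 < r) (hδ : 0 < δ) (hball : Metric.ball x r ⊆ U) (hxy : dist y x ≤ δ) :
    y ∈ Metric.thickening δ U := by
  set t := min r δ / 2 with htdef
  have ht : 0 < t := by positivity
  have htr : t < r := by
    have := min_le_left r δ; rw [htdef]; linarith
  have htδ : t ≤ δ / 2 := by
    have := min_le_right r δ; rw [htdef]; linarith
  have hc1 : t / δ ≤ 1 := by
    rw [div_le_one hδ]; linarith
  have hnd : ‖y - x‖ ≤ δ := by rw [← dist_eq_norm]; exact hxy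
  refine Metric.mem_thickening_iff.mpr ⟨x + (t / δ) • (y - x), hball ?_, ?_⟩
  · rw [Metric.mem_ball, dist_eq_norm, add_sub_cancel_left, norm_smul, Real.norm_eq_abs,
      abs_of_nonneg (by positivity)]
    calc t / δ * ‖y - x‖ ≤ t / δ * δ := by
          exact mul_le_mul_of_nonneg_left hnd (by positivity)
      _ = t := by field_simp
      _ < r := htr
  · have hrw : y - (x + (t / δ) • (y - x)) = (1 - t / δ) • (y - x) := by
      rw [sub_smul, one_smul]; abel
    rw [dist_eq_norm, hrw, norm_smul, Real.norm_eq_abs, abs_of_nonneg (by linarith)]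
    calc (1 - t / δ) * ‖y - x‖ ≤ (1 - t / δ) * δ := by
          exact mul_le_mul_of_nonneg_left hnd (by linarith)
      _ = δ - t := by field_simp
      _ < δ := by linarith

lemma aux_thick {n d : ℕ} {U : Set (Euc n)} {δ : ℝ} (hδ : 0 < δ)
    {φ : Euc n × Gr n d → ℝ} (hlip : LipschitzWith 1 φ)
    (hsupp : tsupport φ ⊆ U ×ˢ (univ : Set (Gr n d)))
    {x y : Euc n} {P : Gr n d} (hne : φ (x, P) ≠ 0) (hxy : dist y x ≤ δ) :
    y ∈ Metric.thickening δ U := by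
  refine aux_mem_thickening (abs_pos.mpr hne) hδ ?_ hxy
  intro z hz
  by_contra hzU
  have hz0 : φ (z, P) = 0 :=
    image_eq_zero_of_notMem_tsupport fun hmem => hzU (hsupp hmem).1
  have h2 := hlip.dist_le_mul (x, P) (z, P)
  rw [Real.dist_eq, hz0, sub_zero] at h2
  have h3 : dist ((x, P) : Euc n × Gr n d) (z, P) = dist x z := by
    rw [Prod.dist_eq]; simp only [dist_self]; exact max_eq_left dist_nonneg
  simp only [h3, NNReal.coe_one, one_mul] at h2
  rw [Metric.mem_ball, dist_comm] at hz
  linarith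

lemma aux_lipd {n d : ℕ} {φ : Euc n × Gr n d → ℝ} (hlip : LipschitzWith 1 φ)
    (a b : Euc n) (Q : Gr n d) : |φ (a, Q) - φ (b, Q)| ≤ dist a b := by
  have h2 := hlip.dist_le_mul (a, Q) (b, Q)
  rw [Real.dist_eq] at h2
  have h3 : dist ((a, Q) : Euc n × Gr n d) (b, Q) = dist a b := by
    rw [Prod.dist_eq]; simp only [dist_self]; exact max_eq_left dist_nonneg
  simp only [h3, NNReal.coe_one, one_mul] at h2
  exact h2

lemma aux_integrable {α : Type*} [MeasurableSpace α] [TopologicalSpace α]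
    [OpensMeasurableSpace α] {μ : Measure α} {φ : α → ℝ} {A : Set α}
    (hA : MeasurableSet A) (hfin : μ A ≠ ⊤) (hφc : Continuous φ)
    (h0 : ∀ p ∉ A, φ p = 0) (h1 : ∀ p, |φ p| ≤ 1) : Integrable φ μ := by
  refine ⟨hφc.aestronglyMeasurable, ?_⟩
  have hb : ∫⁻ a, ‖φ a‖₊ ∂μ ≤ ∫⁻ a, A.indicator (fun _ => (1 : ℝ≥0∞)) a ∂μ := by
    refine lintegral_mono fun p => ?_
    by_cases hp : p ∈ A
    · rw [Set.indicator_of_mem hp, ← enorm_eq_nnnorm, ← ofReal_norm]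
      calc ENNReal.ofReal ‖φ p‖ ≤ ENNReal.ofReal 1 :=
            ENNReal.ofReal_le_ofReal (by rw [Real.norm_eq_abs]; exact h1 p)
        _ = 1 := ENNReal.ofReal_one
    · rw [Set.indicator_of_notMem hp, h0 p hp]; simp
  have he : ∫⁻ a, A.indicator (fun _ => (1 : ℝ≥0∞)) a ∂μ = μ A := by
    rw [lintegral_indicator hA, setLIntegral_const, one_mul]
  exact lt_of_le_of_lt (hb.trans he.le) hfin.lt_top


/-- Proposition `prop_comparison_volumetric_point_cloud`.
Comparison between the discrete volumetric varifold and the point cloud varifold built on the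
same mesh: `Δ^{1,1}_U(V^{vol}, V^{pt}) ≤ δ · min(‖V^{vol}‖(U^δ), ‖V^{pt}‖(U^δ))`. -/
theorem statement_0 {n d : ℕ} (hd : 1 ≤ d) (hdn : d < n)
    (Ω : Set (Euc n)) (hΩ : IsOpen Ω)
    {ι : Type} [Countable ι] (K : ι → Set (Euc n))
    (hdisj : Pairwise (Function.onFun Disjoint K))
    (hcover : ⋃ k, K k = Ω)
    (hlocfin : ∀ B : Set (Euc n), Bornology.IsBounded B → {k : ι | (K k ∩ B).Nonempty}.Finite)
    (δ : ℝ) (hδ : ∀ k, EMetric.diam (K k) ≤ ENNReal.ofReal δ)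
    (x : ι → Euc n) (m : ι → ℝ≥0) (P : ι → Gr n d)
    (hx : ∀ k, x k ∈ K k) (hvol : ∀ k, 0 < volume (K k))
    (U : Set (Euc n)) (hU : IsOpen U) (hUΩ : U ⊆ Ω) :
    ENNReal.ofReal (BL U
        (Measure.sum fun k =>
          ((m k : ℝ≥0∞) / volume (K k)) • ((volume.restrict (K k)).map (fun y => (y, P k))))
        (Measure.sum fun k => (m k : ℝ≥0∞) • Measure.dirac (x k, P k)))
      ≤ ENNReal.ofReal δ *
        min
          (mass (Measure.sum fun k =>
              ((m k : ℝ≥0∞) / volume (K k)) • ((volume.restrict (K k)).map (fun y => (y, P k))))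
            (Metric.thickening δ U))
          (mass (Measure.sum fun k => (m k : ℝ≥0∞) • Measure.dirac (x k, P k))
            (Metric.thickening δ U)) := by
  classical
  by_cases hδpos : 0 < δ
  case neg =>
    rw [not_lt] at hδpos
    have hn : 0 < n := by omega
    haveI : Nonempty (Fin n) := ⟨⟨0, hn⟩⟩
    haveI : Nontrivial (Euc n) := by infer_instance
    have hι : IsEmpty ι := by
      refine ⟨fun k => ?_⟩
      have h1 : EMetric.diam (K k) = 0 :=
        le_antisymm ((hδ k).trans (by simp [ENNReal.ofReal_eq_zero.mpr hδpos])) (zero_le)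
      have h2 : (K k).Subsingleton := EMetric.diam_eq_zero_iff.mp h1
      exact absurd (hvol k) (by simp [h2.measure_zero volume])
    simp only [Measure.sum_of_isEmpty]
    have hBL : BL U (0 : Measure (Euc n × Gr n d)) 0 ≤ 0 := by
      refine Real.sSup_le ?_ le_rfl
      rintro r ⟨φ, -, -, -, rfl⟩
      simp
    refine le_trans ((ENNReal.ofReal_le_ofReal hBL).trans (by simp)) (zero_le)
  case pos =>
  set Vk : ι → Measure (Euc n × Gr n d) := fun k =>
    ((m k : ℝ≥0∞) / volume (K k)) • ((volume.restrict (K k)).map (fun y => (y, P k))) with hVk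
  set Wk : ι → Measure (Euc n × Gr n d) := fun k =>
    (m k : ℝ≥0∞) • Measure.dirac (x k, P k) with hWk
  set V : Measure (Euc n × Gr n d) := Measure.sum Vk with hV
  set W : Measure (Euc n × Gr n d) := Measure.sum Wk with hW
  have hTm : MeasurableSet (Metric.thickening δ U) := Metric.isOpen_thickening.measurableSet
  have hAm : MeasurableSet (Prod.fst ⁻¹' Metric.thickening δ U : Set (Euc n × Gr n d)) :=
    measurable_fst hTm
  have hKb : ∀ k, volume (K k) ≠ ⊤ := fun k =>
    (Metric.isBounded_iff_ediam_ne_top.mpr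
      (ne_top_of_le_ne_top ENNReal.ofReal_ne_top (hδ k))).measure_lt_top.ne
  have hK0 : ∀ k, volume (K k) ≠ 0 := fun k => (hvol k).ne'
  have hdistK : ∀ k, ∀ y ∈ K k, dist y (x k) ≤ δ := by
    intro k y hy
    have h1 : edist y (x k) ≤ ENNReal.ofReal δ :=
      (EMetric.edist_le_diam_of_mem hy (hx k)).trans (hδ k)
    rw [edist_dist] at h1
    exact (ENNReal.ofReal_le_ofReal_iff hδpos.le).mp h1
  have hdist_ae : ∀ k, ∀ᵐ y ∂(volume.restrict (K k)), dist y (x k) ≤ δ := by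
    intro k
    have hms : MeasurableSet {a : Euc n | dist a (x k) ≤ δ} :=
      measurableSet_le (Continuous.measurable (by fun_prop)) measurable_const
    rw [ae_iff]
    show (volume.restrict (K k)) {a : Euc n | dist a (x k) ≤ δ}ᶜ = 0
    rw [Measure.restrict_apply hms.compl]
    have hsub : {a : Euc n | dist a (x k) ≤ δ}ᶜ ∩ K k = ∅ := by
      ext y
      simp only [Set.mem_inter_iff, Set.mem_compl_iff, Set.mem_setOf_eq,
        Set.mem_empty_iff_false, iff_false, not_and]
      exact fun hy hyK => hy (hdistK k y hyK)
    rw [hsub]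
    exact measure_empty
  have hfinK : ∀ k, IsFiniteMeasure (volume.restrict (K k)) := fun k =>
    ⟨by rw [Measure.restrict_apply_univ]; exact (hKb k).lt_top⟩
  have hVA : Measure.sum Vk (Prod.fst ⁻¹' Metric.thickening δ U) =
      ∑' k, (m k : ℝ≥0∞) / volume (K k) * volume (Metric.thickening δ U ∩ K k) := by
    rw [Measure.sum_apply _ hAm]
    congr 1
    funext k
    simp only [hVk, Measure.smul_apply, smul_eq_mul]
    rw [Measure.map_apply (show Measurable fun y : Euc n => (y, P k) from measurable_id.prodMk measurable_const) hAm]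
    have hpre : ((fun y : Euc n => (y, P k)) ⁻¹' (Prod.fst ⁻¹' Metric.thickening δ U)) =
        Metric.thickening δ U := rfl
    rw [hpre, Measure.restrict_apply hTm]
  have hWA : Measure.sum Wk (Prod.fst ⁻¹' Metric.thickening δ U) =
      ∑' k, (m k : ℝ≥0∞) *
        (Prod.fst ⁻¹' Metric.thickening δ U : Set (Euc n × Gr n d)).indicator 1 (x k, P k) := by
    rw [Measure.sum_apply _ hAm]
    congr 1
    funext k
    simp only [hWk, Measure.smul_apply, smul_eq_mul]
    rw [Measure.dirac_apply' _ hAm]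
  have hmass1 : mass V (Metric.thickening δ U) =
      Measure.sum Vk (Prod.fst ⁻¹' Metric.thickening δ U) := by
    rw [hV]; unfold mass; exact Measure.map_apply measurable_fst hTm
  have hmass2 : mass W (Metric.thickening δ U) =
      Measure.sum Wk (Prod.fst ⁻¹' Metric.thickening δ U) := by
    rw [hW]; unfold mass; exact Measure.map_apply measurable_fst hTm
  by_cases htop : ENNReal.ofReal δ *
      min (mass V (Metric.thickening δ U)) (mass W (Metric.thickening δ U)) = ⊤
  · rw [htop]; exact le_top
  have hδ0 : ENNReal.ofReal δ ≠ 0 := by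
    simp [ENNReal.ofReal_eq_zero, not_le.mpr hδpos]
  have hmin : min (Measure.sum Vk (Prod.fst ⁻¹' Metric.thickening δ U))
      (Measure.sum Wk (Prod.fst ⁻¹' Metric.thickening δ U)) ≠ ⊤ := by
    intro h
    exact htop (by rw [hmass1, hmass2, h, ENNReal.mul_top hδ0])
  have hor : Measure.sum Vk (Prod.fst ⁻¹' Metric.thickening δ U) ≠ ⊤ ∨
      Measure.sum Wk (Prod.fst ⁻¹' Metric.thickening δ U) ≠ ⊤ := by
    rcases le_total (Measure.sum Vk (Prod.fst ⁻¹' Metric.thickening δ U))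
      (Measure.sum Wk (Prod.fst ⁻¹' Metric.thickening δ U)) with h | h
    · exact Or.inl (by rw [← min_eq_left h]; exact hmin)
    · exact Or.inr (by rw [← min_eq_right h]; exact hmin)
  have key : ∀ φ : Euc n × Gr n d → ℝ, LipschitzWith 1 φ → (∀ p, |φ p| ≤ 1) →
      tsupport φ ⊆ U ×ˢ (univ : Set (Gr n d)) →
      ENNReal.ofReal |(∫ p, φ p ∂V) - ∫ p, φ p ∂W| ≤
        ENNReal.ofReal δ *
          min (mass V (Metric.thickening δ U)) (mass W (Metric.thickening δ U)) := by
    intro φ hlip hbd hsupp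
    have hφc : Continuous φ := hlip.continuous
    have hzero : ∀ p ∉ (Prod.fst ⁻¹' Metric.thickening δ U : Set (Euc n × Gr n d)), φ p = 0 := by
      intro p hp
      refine image_eq_zero_of_notMem_tsupport fun hmem => hp ?_
      exact Metric.self_subset_thickening hδpos U (hsupp hmem).1
    have hnn : ∀ p, (‖φ p‖₊ : ℝ≥0∞) ≤ 1 := fun p => by
      rw [← enorm_eq_nnnorm, ← ofReal_norm]
      calc ENNReal.ofReal ‖φ p‖ ≤ ENNReal.ofReal 1 :=
            ENNReal.ofReal_le_ofReal (by rw [Real.norm_eq_abs]; exact hbd p)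
        _ = 1 := ENNReal.ofReal_one
    -- integrability of φ with respect to both V and W
    have hInt : Integrable φ V ∧ Integrable φ W := by
      rcases hor with hfin | hfin
      · constructor
        · exact aux_integrable hAm (by rw [hV]; exact hfin) hφc hzero hbd
        · refine ⟨hφc.aestronglyMeasurable, ?_⟩
          show ∫⁻ p, ‖φ p‖₊ ∂W < ⊤
          have hWlint : ∫⁻ p, ‖φ p‖₊ ∂(Measure.sum Wk) =
              ∑' k, (m k : ℝ≥0∞) * ‖φ (x k, P k)‖₊ := by
            rw [lintegral_sum_measure]
            congr 1; funext k
            simp only [hWk]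
            rw [lintegral_smul_measure, lintegral_dirac' _ hφc.measurable.nnnorm.coe_nnreal_ennreal, smul_eq_mul]
          rw [hW, hWlint]
          refine lt_of_le_of_lt
            (b := ∑' k, (m k : ℝ≥0∞) / volume (K k) * volume (Metric.thickening δ U ∩ K k))
            (ENNReal.tsum_le_tsum fun k => ?_) ?_
          · by_cases h0 : φ (x k, P k) = 0
            · simp [h0]
            · have hKT : Metric.thickening δ U ∩ K k = K k :=
                Set.inter_eq_self_of_subset_right
                  (fun y hy => aux_thick hδpos hlip hsupp h0 (hdistK k y hy))
              rw [hKT, ENNReal.div_mul_cancel (hK0 k) (hKb k)]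
              calc (m k : ℝ≥0∞) * ‖φ (x k, P k)‖₊ ≤ (m k : ℝ≥0∞) * 1 :=
                    mul_le_mul_right (hnn _) _
                _ = (m k : ℝ≥0∞) := mul_one _
          · rw [← hVA]; exact hfin.lt_top
      · constructor
        · refine ⟨hφc.aestronglyMeasurable, ?_⟩
          show ∫⁻ p, ‖φ p‖₊ ∂V < ⊤
          have hVlint : ∫⁻ p, ‖φ p‖₊ ∂(Measure.sum Vk) =
              ∑' k, (m k : ℝ≥0∞) / volume (K k) *
                ∫⁻ y, ‖φ (y, P k)‖₊ ∂(volume.restrict (K k)) := by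
            rw [lintegral_sum_measure]
            congr 1; funext k
            simp only [hVk]
            rw [lintegral_smul_measure,
              lintegral_map hφc.measurable.nnnorm.coe_nnreal_ennreal (show Measurable fun y : Euc n => (y, P k) from measurable_id.prodMk measurable_const), smul_eq_mul]
          rw [hV, hVlint]
          refine lt_of_le_of_lt
            (b := ∑' k, (m k : ℝ≥0∞) *
              (Prod.fst ⁻¹' Metric.thickening δ U :
                Set (Euc n × Gr n d)).indicator 1 (x k, P k))
            (ENNReal.tsum_le_tsum fun k => ?_) ?_
          · show (m k : ℝ≥0∞) / volume (K k) * ∫⁻ y, ‖φ (y, P k)‖₊ ∂(volume.restrict (K k)) ≤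
              (m k : ℝ≥0∞) *
                (Prod.fst ⁻¹' Metric.thickening δ U : Set (Euc n × Gr n d)).indicator 1 (x k, P k)
            by_cases hxT : x k ∈ Metric.thickening δ U
            · have hxA : ((x k, P k) : Euc n × Gr n d) ∈
                  (Prod.fst ⁻¹' Metric.thickening δ U : Set (Euc n × Gr n d)) := hxT
              rw [Set.indicator_of_mem hxA, Pi.one_apply, mul_one]
              calc (m k : ℝ≥0∞) / volume (K k) *
                    ∫⁻ y, ‖φ (y, P k)‖₊ ∂(volume.restrict (K k))
                  ≤ (m k : ℝ≥0∞) / volume (K k) * ∫⁻ _, 1 ∂(volume.restrict (K k)) :=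
                    mul_le_mul_right (lintegral_mono fun y => hnn _) _
                _ = (m k : ℝ≥0∞) / volume (K k) * volume (K k) := by
                    rw [lintegral_one, Measure.restrict_apply_univ]
                _ = (m k : ℝ≥0∞) := ENNReal.div_mul_cancel (hK0 k) (hKb k)
            · have hz : ∀ᵐ y ∂(volume.restrict (K k)), (‖φ (y, P k)‖₊ : ℝ≥0∞) = 0 := by
                filter_upwards [hdist_ae k] with y hy
                have h0 : φ (y, P k) = 0 := by
                  by_contra h
                  exact hxT (aux_thick hδpos hlip hsupp h (by rw [dist_comm]; exact hy))
                simp [h0]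
              rw [lintegral_congr_ae hz, lintegral_zero, mul_zero]
              exact zero_le
          · rw [← hWA]; exact hfin.lt_top
        · exact aux_integrable hAm (by rw [hW]; exact hfin) hφc hzero hbd
    obtain ⟨hIntV, hIntW⟩ := hInt
    -- per-cell integrands
    have hint1 : ∀ k, Integrable (fun y => φ (y, P k)) (volume.restrict (K k)) := by
      intro k
      haveI := hfinK k
      exact (integrable_const (1 : ℝ)).mono'
        ((hφc.comp (continuous_id.prodMk continuous_const)).aestronglyMeasurable)
        (ae_of_all _ fun y => by simpa [Real.norm_eq_abs] using hbd (y, P k))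
    have hint2 : ∀ k, Integrable (fun _ : Euc n => φ (x k, P k)) (volume.restrict (K k)) := by
      intro k; haveI := hfinK k; exact integrable_const _
    have hintd : ∀ k, Integrable (fun y => φ (y, P k) - φ (x k, P k)) (volume.restrict (K k)) :=
      fun k => (hint1 k).sub (hint2 k)
    set D : ι → ℝ := fun k =>
      ∫ y, (φ (y, P k) - φ (x k, P k)) ∂(volume.restrict (K k)) with hDdef
    set α : ι → ℝ := fun k => ((m k : ℝ≥0∞) / volume (K k)).toReal with hαdef
    have hmv : ∀ k, α k * (volume (K k)).toReal = (m k : ℝ) := by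
      intro k
      simp only [hαdef]
      rw [← ENNReal.toReal_mul, ENNReal.div_mul_cancel (hK0 k) (hKb k), ENNReal.coe_toReal]
    have hgk : ∀ k, (∫ p, φ p ∂(Vk k)) - ∫ p, φ p ∂(Wk k) = α k * D k := by
      intro k
      simp only [hVk, hWk, hDdef]
      rw [integral_smul_measure, integral_smul_measure,
        integral_map (show Measurable fun y : Euc n => (y, P k) from measurable_id.prodMk measurable_const).aemeasurable
          hφc.aestronglyMeasurable,
        integral_dirac]
      rw [integral_sub (hint1 k) (hint2 k), integral_const, measureReal_restrict_apply_univ, measureReal_def]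
      rw [smul_eq_mul, smul_eq_mul, smul_eq_mul, mul_sub, ENNReal.coe_toReal, ← hmv k]
      ring
    have hIntV' : Integrable φ (Measure.sum Vk) := by rw [← hV]; exact hIntV
    have hIntW' : Integrable φ (Measure.sum Wk) := by rw [← hW]; exact hIntW
    have hsumV : HasSum (fun k => ∫ p, φ p ∂(Vk k)) (∫ p, φ p ∂V) := by
      rw [hV]; exact hasSum_integral_measure hIntV'
    have hsumW : HasSum (fun k => ∫ p, φ p ∂(Wk k)) (∫ p, φ p ∂W) := by
      rw [hW]; exact hasSum_integral_measure hIntW'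
    have hdiffsum : HasSum (fun k => α k * D k) ((∫ p, φ p ∂V) - ∫ p, φ p ∂W) := by
      have h := hsumV.sub hsumW
      have he : (fun k => (∫ p, φ p ∂(Vk k)) - ∫ p, φ p ∂(Wk k)) = fun k => α k * D k :=
        funext hgk
      rwa [he] at h
    have hsummable : Summable fun k => |α k * D k| := hdiffsum.summable.abs
    have habs : |(∫ p, φ p ∂V) - ∫ p, φ p ∂W| ≤ ∑' k, |α k * D k| := by
      rw [← hdiffsum.tsum_eq]
      simpa only [Real.norm_eq_abs] using
        norm_tsum_le_tsum_norm (f := fun k => α k * D k)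
          (by simpa only [Real.norm_eq_abs] using hsummable)
    -- per-cell bounds
    have hD1 : ∀ k, |D k| ≤ δ * (volume (Metric.thickening δ U ∩ K k)).toReal := by
      intro k
      haveI := hfinK k
      calc |D k| ≤ ∫ y, |φ (y, P k) - φ (x k, P k)| ∂(volume.restrict (K k)) := by
            simpa [hDdef, Real.norm_eq_abs] using
              norm_integral_le_integral_norm (μ := volume.restrict (K k))
                (fun y => φ (y, P k) - φ (x k, P k))
        _ ≤ ∫ y, (Metric.thickening δ U).indicator (fun _ => δ) y ∂(volume.restrict (K k)) := by
            refine integral_mono_ae (hintd k).abs ((integrable_const δ).indicator hTm) ?_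
            filter_upwards [hdist_ae k] with y hy
            by_cases hyT : y ∈ Metric.thickening δ U
            · rw [Set.indicator_of_mem hyT]
              exact (aux_lipd hlip y (x k) (P k)).trans hy
            · rw [Set.indicator_of_notMem hyT]
              have h1 : φ (y, P k) = 0 := by
                by_contra h
                exact hyT (Metric.self_subset_thickening hδpos U
                  ((hsupp (subset_tsupport φ h)).1))
              have h2 : φ (x k, P k) = 0 := by
                by_contra h
                exact hyT (aux_thick hδpos hlip hsupp h hy)
              simp [h1, h2]
        _ = δ * (volume (Metric.thickening δ U ∩ K k)).toReal := by
            rw [integral_indicator_const _ hTm, measureReal_restrict_apply hTm, measureReal_def, smul_eq_mul, mul_comm]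
    have hD2 : ∀ k, |D k| ≤ (volume (K k)).toReal *
        (Metric.thickening δ U).indicator (fun _ => δ) (x k) := by
      intro k
      haveI := hfinK k
      calc |D k| ≤ ∫ y, |φ (y, P k) - φ (x k, P k)| ∂(volume.restrict (K k)) := by
            simpa [hDdef, Real.norm_eq_abs] using
              norm_integral_le_integral_norm (μ := volume.restrict (K k))
                (fun y => φ (y, P k) - φ (x k, P k))
        _ ≤ ∫ _, (Metric.thickening δ U).indicator (fun _ => δ) (x k)
              ∂(volume.restrict (K k)) := by
            refine integral_mono_ae (hintd k).abs (integrable_const _) ?_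
            filter_upwards [hdist_ae k] with y hy
            by_cases hxT : x k ∈ Metric.thickening δ U
            · rw [Set.indicator_of_mem hxT]
              exact (aux_lipd hlip y (x k) (P k)).trans hy
            · rw [Set.indicator_of_notMem hxT]
              have h2 : φ (x k, P k) = 0 := by
                by_contra h
                exact hxT (Metric.self_subset_thickening hδpos U
                  ((hsupp (subset_tsupport φ h)).1))
              have h1 : φ (y, P k) = 0 := by
                by_contra h
                exact hxT (aux_thick hδpos hlip hsupp h (by rw [dist_comm]; exact hy))
              simp [h1, h2]
        _ = (volume (K k)).toReal *
              (Metric.thickening δ U).indicator (fun _ => δ) (x k) := by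
            rw [integral_const, measureReal_restrict_apply_univ, measureReal_def, smul_eq_mul]
    have hperk : ∀ k, ENNReal.ofReal |α k * D k| ≤ ENNReal.ofReal δ *
        min ((m k : ℝ≥0∞) / volume (K k) * volume (Metric.thickening δ U ∩ K k))
          ((m k : ℝ≥0∞) *
            (Prod.fst ⁻¹' Metric.thickening δ U : Set (Euc n × Gr n d)).indicator 1 (x k, P k)) := by
      intro k
      have hα0 : (0 : ℝ) ≤ α k := ENNReal.toReal_nonneg
      have hofα : ENNReal.ofReal (α k) = (m k : ℝ≥0∞) / volume (K k) := by
        simp only [hαdef]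
        exact ENNReal.ofReal_toReal (ENNReal.div_lt_top ENNReal.coe_ne_top (hK0 k)).ne
      have hb1 : ENNReal.ofReal |α k * D k| ≤ ENNReal.ofReal δ *
          ((m k : ℝ≥0∞) / volume (K k) * volume (Metric.thickening δ U ∩ K k)) := by
        rw [abs_mul, abs_of_nonneg hα0, ENNReal.ofReal_mul hα0, hofα]
        calc (m k : ℝ≥0∞) / volume (K k) * ENNReal.ofReal |D k|
            ≤ (m k : ℝ≥0∞) / volume (K k) *
              (ENNReal.ofReal δ * volume (Metric.thickening δ U ∩ K k)) := by
              refine mul_le_mul_right ?_ _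
              calc ENNReal.ofReal |D k|
                  ≤ ENNReal.ofReal (δ * (volume (Metric.thickening δ U ∩ K k)).toReal) :=
                    ENNReal.ofReal_le_ofReal (hD1 k)
                _ = ENNReal.ofReal δ *
                      ENNReal.ofReal ((volume (Metric.thickening δ U ∩ K k)).toReal) :=
                    ENNReal.ofReal_mul hδpos.le
                _ = ENNReal.ofReal δ * volume (Metric.thickening δ U ∩ K k) := by
                    rw [ENNReal.ofReal_toReal
                      (ne_top_of_le_ne_top (hKb k) (measure_mono Set.inter_subset_right))]
          _ = ENNReal.ofReal δ *
                ((m k : ℝ≥0∞) / volume (K k) * volume (Metric.thickening δ U ∩ K k)) := by ring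
      have hb2 : ENNReal.ofReal |α k * D k| ≤ ENNReal.ofReal δ *
          ((m k : ℝ≥0∞) *
            (Prod.fst ⁻¹' Metric.thickening δ U : Set (Euc n × Gr n d)).indicator 1 (x k, P k)) := by
        rw [abs_mul, abs_of_nonneg hα0, ENNReal.ofReal_mul hα0, hofα]
        calc (m k : ℝ≥0∞) / volume (K k) * ENNReal.ofReal |D k|
            ≤ (m k : ℝ≥0∞) / volume (K k) *
              (volume (K k) *
                ENNReal.ofReal ((Metric.thickening δ U).indicator (fun _ => δ) (x k))) := by
              refine mul_le_mul_right ?_ _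
              calc ENNReal.ofReal |D k|
                  ≤ ENNReal.ofReal ((volume (K k)).toReal *
                      (Metric.thickening δ U).indicator (fun _ => δ) (x k)) :=
                    ENNReal.ofReal_le_ofReal (hD2 k)
                _ = ENNReal.ofReal ((volume (K k)).toReal) *
                      ENNReal.ofReal ((Metric.thickening δ U).indicator (fun _ => δ) (x k)) :=
                    ENNReal.ofReal_mul ENNReal.toReal_nonneg
                _ = volume (K k) *
                      ENNReal.ofReal ((Metric.thickening δ U).indicator (fun _ => δ) (x k)) := by
                    rw [ENNReal.ofReal_toReal (hKb k)]
          _ = (m k : ℝ≥0∞) / volume (K k) * volume (K k) *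
                ENNReal.ofReal ((Metric.thickening δ U).indicator (fun _ => δ) (x k)) := by ring
          _ = (m k : ℝ≥0∞) *
                ENNReal.ofReal ((Metric.thickening δ U).indicator (fun _ => δ) (x k)) := by
              rw [ENNReal.div_mul_cancel (hK0 k) (hKb k)]
          _ = ENNReal.ofReal δ * ((m k : ℝ≥0∞) *
                (Prod.fst ⁻¹' Metric.thickening δ U :
                  Set (Euc n × Gr n d)).indicator 1 (x k, P k)) := by
              by_cases hxT : x k ∈ Metric.thickening δ U
              · have hxA : ((x k, P k) : Euc n × Gr n d) ∈
                    (Prod.fst ⁻¹' Metric.thickening δ U : Set (Euc n × Gr n d)) := hxT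
                rw [Set.indicator_of_mem hxT, Set.indicator_of_mem hxA, Pi.one_apply]
                ring
              · have hxA : ((x k, P k) : Euc n × Gr n d) ∉
                    (Prod.fst ⁻¹' Metric.thickening δ U : Set (Euc n × Gr n d)) := hxT
                rw [Set.indicator_of_notMem hxT, Set.indicator_of_notMem hxA]
                simp
      rcases le_total ((m k : ℝ≥0∞) / volume (K k) * volume (Metric.thickening δ U ∩ K k))
        ((m k : ℝ≥0∞) *
          (Prod.fst ⁻¹' Metric.thickening δ U : Set (Euc n × Gr n d)).indicator 1 (x k, P k))
        with hmle | hmle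
      · rw [min_eq_left hmle]; exact hb1
      · rw [min_eq_right hmle]; exact hb2
    calc ENNReal.ofReal |(∫ p, φ p ∂V) - ∫ p, φ p ∂W|
        ≤ ENNReal.ofReal (∑' k, |α k * D k|) := ENNReal.ofReal_le_ofReal habs
      _ = ∑' k, ENNReal.ofReal |α k * D k| :=
          ENNReal.ofReal_tsum_of_nonneg (fun k => abs_nonneg _) hsummable
      _ ≤ ∑' k, ENNReal.ofReal δ *
            min ((m k : ℝ≥0∞) / volume (K k) * volume (Metric.thickening δ U ∩ K k))
              ((m k : ℝ≥0∞) *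
                (Prod.fst ⁻¹' Metric.thickening δ U :
                  Set (Euc n × Gr n d)).indicator 1 (x k, P k)) :=
          ENNReal.tsum_le_tsum hperk
      _ = ENNReal.ofReal δ * ∑' k,
            min ((m k : ℝ≥0∞) / volume (K k) * volume (Metric.thickening δ U ∩ K k))
              ((m k : ℝ≥0∞) *
                (Prod.fst ⁻¹' Metric.thickening δ U :
                  Set (Euc n × Gr n d)).indicator 1 (x k, P k)) := ENNReal.tsum_mul_left
      _ ≤ ENNReal.ofReal δ *
            min (∑' k, (m k : ℝ≥0∞) / volume (K k) * volume (Metric.thickening δ U ∩ K k))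
              (∑' k, (m k : ℝ≥0∞) *
                (Prod.fst ⁻¹' Metric.thickening δ U :
                  Set (Euc n × Gr n d)).indicator 1 (x k, P k)) :=
          mul_le_mul_right (le_min (ENNReal.tsum_le_tsum fun k => min_le_left _ _)
            (ENNReal.tsum_le_tsum fun k => min_le_right _ _)) _
      _ = ENNReal.ofReal δ *
            min (mass V (Metric.thickening δ U)) (mass W (Metric.thickening δ U)) := by
          rw [hmass1, hmass2, hVA, hWA]
  have hBL : BL U V W ≤ (ENNReal.ofReal δ *
      min (mass V (Metric.thickening δ U)) (mass W (Metric.thickening δ U))).toReal := by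
    refine Real.sSup_le ?_ ENNReal.toReal_nonneg
    rintro r ⟨φ, h1, h2, h3, rfl⟩
    exact (ENNReal.ofReal_le_iff_le_toReal htop).mp (key φ h1 h2 h3)
  calc ENNReal.ofReal (BL U V W)
      ≤ ENNReal.ofReal ((ENNReal.ofReal δ *
          min (mass V (Metric.thickening δ U)) (mass W (Metric.thickening δ U))).toReal) :=
        ENNReal.ofReal_le_ofReal hBL
    _ = ENNReal.ofReal δ *
          min (mass V (Metric.thickening δ U)) (mass W (Metric.thickening δ U)) :=
        ENNReal.ofReal_toReal htop

end VarifoldPaper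
end
end

section
/- Let Ω ⊂ ℝⁿ be an open set and let V be a d-varifold in Ω with finite mass ‖V‖(Ω) < ∞. Then the regularized first variation δV ∗ ρ_ε, defined by δV ∗ ρ_ε(X) := δV(X ∗ ρ_ε) for X ∈ C¹_c(ℝⁿ, ℝⁿ), is represented by the continuous vector field x ↦ ∫_{Ω×G_{d,n}} ∇^S ρ_ε(y − x) dV(y,S) = ε^{−(n+1)} ∫_{Ω×G_{d,n}} ∇^S ρ₁((y−x)/ε) dV(y,S), i.e. δV ∗ ρ_ε(X) = ∫_{ℝⁿ} X(x) · (δV ∗ ρ_ε)(x) dx for all X ∈ C¹_c(ℝⁿ, ℝⁿ); moreover this vector field belongs to L¹(ℝⁿ; ℝⁿ). -/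
open MeasureTheory Filter Metric Set Function
open scoped ENNReal NNReal RealInnerProductSpace Topology Pointwise

noncomputable section

set_option maxHeartbeats 1000000
set_option synthInstance.maxHeartbeats 400000

namespace VarifoldPaper

section AuxProof


lemma deriv_even_zero {ρ : ℝ → ℝ} (h : Differentiable ℝ ρ) (he : ∀ s, ρ (-s) = ρ s) :
    deriv ρ 0 = 0 := by
  have h1 : HasDerivAt ρ (deriv ρ 0) 0 := (h 0).hasDerivAt
  have h2 : HasDerivAt (fun s : ℝ => ρ (-s)) (deriv ρ 0 * (-1)) 0 := by
    have h1' : HasDerivAt ρ (deriv ρ 0) (-(0:ℝ)) := by simpa using h1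
    exact (h1'.comp (0:ℝ) (hasDerivAt_neg (0:ℝ)))
  have h3 : HasDerivAt ρ (deriv ρ 0 * (-1)) 0 := by
    have he' : (fun s : ℝ => ρ (-s)) = ρ := funext he
    rwa [he'] at h2
  have := h1.unique h3
  linarith

lemma radial_hasFDerivAt_zero {ρ : ℝ → ℝ} (h : Differentiable ℝ ρ) (he : ∀ s, ρ (-s) = ρ s)
    (n : ℕ) : HasFDerivAt (fun x : Euc n => ρ ‖x‖) (0 : Euc n →L[ℝ] ℝ) 0 := by
  have hd : HasDerivAt ρ 0 0 := by
    have := (h 0).hasDerivAt; rwa [deriv_even_zero h he] at this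
  have ho : (fun s : ℝ => ρ s - ρ 0) =o[𝓝 (0:ℝ)] fun s : ℝ => s := by
    have := hasDerivAt_iff_isLittleO.1 hd
    simpa using this
  have hn : Tendsto (fun x : Euc n => ‖x‖) (𝓝 0) (𝓝 0) := by
    simpa using (continuous_norm.tendsto (0 : Euc n))
  have ho2 := ho.comp_tendsto hn
  rw [hasFDerivAt_iff_isLittleO_nhds_zero]
  have : (fun x : Euc n => ρ ‖x‖ - ρ 0) =o[𝓝 (0:Euc n)] fun x : Euc n => ‖x‖ := ho2
  rw [← Asymptotics.isLittleO_norm_right] at this ⊢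
  simpa [Function.comp, norm_zero] using this

lemma radial_contDiff {ρ : ℝ → ℝ} (hρ : ContDiff ℝ 1 ρ) (he : ∀ s, ρ (-s) = ρ s) (n : ℕ) :
    ContDiff ℝ 1 (fun x : Euc n => ρ ‖x‖) := by
  have hdρ : Differentiable ℝ ρ := hρ.differentiable one_ne_zero
  set f : Euc n → ℝ := fun x => ρ ‖x‖ with hf
  have h0 := radial_hasFDerivAt_zero hdρ he n
  have hne : ∀ x : Euc n, x ≠ 0 → ContDiffAt ℝ 1 f x := fun x hx =>
    hρ.contDiffAt.comp x (contDiffAt_norm ℝ hx)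
  have hdiff : Differentiable ℝ f := by
    intro x
    rcases eq_or_ne x 0 with rfl | hx
    · exact h0.differentiableAt
    · exact (hne x hx).differentiableAt one_ne_zero
  rw [contDiff_one_iff_fderiv]
  refine ⟨hdiff, ?_⟩
  rw [continuous_iff_continuousAt]
  intro x
  rcases eq_or_ne x 0 with rfl | hx
  · have hb : ∀ y : Euc n, ‖fderiv ℝ f y‖ ≤ |deriv ρ ‖y‖| := by
      intro y
      rcases eq_or_ne y 0 with rfl | hy
      · rw [h0.fderiv]; simp
      · have hnd : DifferentiableAt ℝ (fun x : Euc n => ‖x‖) y :=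
          (contDiffAt_norm ℝ hy).differentiableAt (one_ne_zero : (1 : WithTop ℕ∞) ≠ 0)
        have hcomp : fderiv ℝ f y
            = (fderiv ℝ ρ ‖y‖).comp (fderiv ℝ (fun x : Euc n => ‖x‖) y) := by
          rw [show f = ρ ∘ (fun x : Euc n => ‖x‖) from rfl]
          exact fderiv_comp y (hdρ _) hnd
        have h1 : ‖fderiv ℝ ρ ‖y‖‖ = |deriv ρ ‖y‖| := by
          rw [← norm_deriv_eq_norm_fderiv]
          simp [ContinuousLinearMap.norm_smulRight_apply]
        have h2 : ‖fderiv ℝ (fun x : Euc n => ‖x‖) y‖ ≤ 1 := by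
          simpa using norm_fderiv_le_of_lipschitz ℝ (lipschitzWith_one_norm (E := Euc n))
        calc ‖fderiv ℝ f y‖ ≤ ‖fderiv ℝ ρ ‖y‖‖ * ‖fderiv ℝ (fun x : Euc n => ‖x‖) y‖ := by
              rw [hcomp]; exact ContinuousLinearMap.opNorm_comp_le _ _
          _ ≤ |deriv ρ ‖y‖| * 1 := by rw [h1]; exact mul_le_mul_of_nonneg_left h2 (abs_nonneg _)
          _ = |deriv ρ ‖y‖| := mul_one _
    have hcont : Tendsto (fun y : Euc n => |deriv ρ ‖y‖|) (𝓝 0) (𝓝 0) := by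
      have hc : Continuous fun y : Euc n => |deriv ρ ‖y‖| :=
        ((hρ.continuous_deriv le_rfl).comp continuous_norm).abs
      have h00 := hc.tendsto (0 : Euc n)
      simpa [deriv_even_zero hdρ he] using h00
    have hsq := squeeze_zero_norm hb hcont
    have : ContinuousAt (fderiv ℝ f) 0 := by
      unfold ContinuousAt
      rw [h0.fderiv]
      exact hsq
    exact this
  · have hopen : IsOpen {y : Euc n | y ≠ 0} := isOpen_ne
    have hcd : ContDiffOn ℝ 1 f {y : Euc n | y ≠ 0} := fun y hy => (hne y hy).contDiffWithinAt
    exact (hcd.continuousOn_fderiv_of_isOpen hopen le_rfl).continuousAt (hopen.mem_nhds hx)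


lemma inner_gradient {n : ℕ} (g : Euc n → ℝ) (w v : Euc n) :
    ⟪gradient g w, v⟫ = fderiv ℝ g w v := by
  unfold gradient
  exact InnerProductSpace.toDual_symm_apply

lemma Gr.op_norm_le {n d : ℕ} (P : Gr n d) (v : Euc n) : ‖Gr.op P v‖ ≤ ‖v‖ := by
  obtain ⟨P, hsym, hidem, -⟩ := P
  show ‖P v‖ ≤ ‖v‖
  have h1 : ‖P v‖ ^ 2 = ⟪P v, P v⟫ := (real_inner_self_eq_norm_sq _).symm
  have h2 : ⟪P v, P v⟫ = ⟪v, P (P v)⟫ := hsym v (P v)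
  have h3 : P (P v) = P v := by
    conv_rhs => rw [← hidem]
    rfl
  rw [h3] at h2
  have h4 : ⟪v, P v⟫ ≤ ‖v‖ * ‖P v‖ := real_inner_le_norm v (P v)
  nlinarith [norm_nonneg (P v), norm_nonneg v]

lemma Gr.isometry_op {n d : ℕ} : Isometry (fun P : Gr n d => Gr.op P) := fun _ _ => rfl

lemma gradient_scale {n : ℕ} (f : Euc n → ℝ) (a c : ℝ) (x : Euc n)
    (hf : DifferentiableAt ℝ f (c • x)) :
    HasGradientAt (fun y : Euc n => a * f (c • y)) ((a * c) • gradient f (c • x)) x := by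
  have hD : HasFDerivAt f (fderiv ℝ f (c • x)) (c • x) := hf.hasFDerivAt
  have hsm : HasFDerivAt (fun y : Euc n => c • y) (c • ContinuousLinearMap.id ℝ (Euc n)) x := by
    exact (hasFDerivAt_id x).const_smul c
  have hcomp : HasFDerivAt (fun y : Euc n => f (c • y))
      ((fderiv ℝ f (c • x)).comp (c • ContinuousLinearMap.id ℝ (Euc n))) x := hD.comp x hsm
  have hmul := hcomp.const_mul a
  rw [hasGradientAt_iff_hasFDerivAt]
  convert hmul using 1
  · ext; rfl
  ext v
  rw [InnerProductSpace.toDual_apply_apply, real_inner_smul_left, inner_gradient]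
  simp [smul_eq_mul]
  ring

lemma contDiff_keps {n : ℕ} {ρ : ℝ → ℝ} {ε : ℝ} (hρC1 : ContDiff ℝ 1 ρ)
    (he : ∀ s, ρ (-s) = ρ s) (hε : 0 < ε) : ContDiff ℝ 1 (keps n ρ ε) := by
  have h2 : ContDiff ℝ 1 (fun s : ℝ => (ε ^ n)⁻¹ * ρ (s / ε)) :=
    contDiff_const.mul (hρC1.comp (contDiff_id.div_const ε))
  have he2 : ∀ s : ℝ, (ε ^ n)⁻¹ * ρ ((-s) / ε) = (ε ^ n)⁻¹ * ρ (s / ε) := by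
    intro s; rw [neg_div, he]
  exact radial_contDiff h2 he2 n

lemma keps_support {n : ℕ} {ρ : ℝ → ℝ} {ε : ℝ} (hsupp : ∀ s : ℝ, 1 ≤ |s| → ρ s = 0)
    (hε : 0 < ε) : HasCompactSupport (keps n ρ ε) := by
  apply HasCompactSupport.intro (isCompact_closedBall (0 : Euc n) ε)
  intro x hx
  have hlt : ε < ‖x‖ := by
    have := hx
    simp only [mem_closedBall, dist_zero_right, not_le] at this
    exact this
  have h1 : (1:ℝ) ≤ |‖x‖ / ε| := by
    rw [abs_of_nonneg (div_nonneg (norm_nonneg _) hε.le)]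
    rw [le_div_iff₀ hε]
    linarith
  simp [keps, hsupp _ h1]

lemma gradient_keps {n : ℕ} {ρ : ℝ → ℝ} {ε : ℝ} (hρC1 : ContDiff ℝ 1 ρ)
    (he : ∀ s, ρ (-s) = ρ s) (hε : 0 < ε) (z : Euc n) :
    gradient (keps n ρ ε) z
      = (ε ^ (n+1) : ℝ)⁻¹ • gradient (fun x : Euc n => ρ ‖x‖) (ε⁻¹ • z) := by
  have hrad : ContDiff ℝ 1 (fun x : Euc n => ρ ‖x‖) := radial_contDiff hρC1 he n
  have hkeq : keps n ρ ε = fun y : Euc n => (ε ^ n)⁻¹ * (fun x : Euc n => ρ ‖x‖) (ε⁻¹ • y) := by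
    funext y
    simp only [keps, norm_smul, norm_inv, Real.norm_eq_abs, abs_of_pos hε, div_eq_inv_mul]
  rw [hkeq]
  have hg := (gradient_scale (fun x : Euc n => ρ ‖x‖) ((ε ^ n)⁻¹) ε⁻¹ z
    ((hrad.differentiable one_ne_zero) _)).gradient
  rw [hg]
  congr 1
  rw [← mul_inv, ← pow_succ]

end AuxProof

section AuxProof2

open scoped Convolution

variable {n d : ℕ}

lemma continuous_gradient_of_contDiff {k : Euc n → ℝ} (hk : ContDiff ℝ 1 k) :
    Continuous (gradient k) := by
  have h : Continuous fun x : Euc n =>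
      (InnerProductSpace.toDual ℝ (Euc n)).symm (fderiv ℝ k x) :=
    (InnerProductSpace.toDual ℝ (Euc n)).symm.continuous.comp (hk.continuous_fderiv one_ne_zero)
  exact h

lemma hasCompactSupport_gradient {k : Euc n → ℝ} (hk : HasCompactSupport k) :
    HasCompactSupport (gradient k) := by
  have h1 : HasCompactSupport (fderiv ℝ k) := hk.fderiv ℝ
  have h2 := h1.comp_left
    (g := fun T : Euc n →L[ℝ] ℝ => (InnerProductSpace.toDual ℝ (Euc n)).symm T) (by simp)
  exact h2

lemma continuous_op_apply {α : Type*} [TopologicalSpace α] {A : α → Gr n d} {v : α → Euc n}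
    (hA : Continuous A) (hv : Continuous v) : Continuous fun a => Gr.op (A a) (v a) :=
  isBoundedBilinearMap_apply.continuous.comp ((Gr.isometry_op.continuous.comp hA).prodMk hv)

lemma integrable_snd_prod (V : Measure (Euc n × Gr n d)) [IsFiniteMeasure V]
    {E : Type*} [NormedAddCommGroup E] {g : Euc n → E} (hg : Continuous g)
    (hgs : HasCompactSupport g) :
    Integrable (fun q : (Euc n × Gr n d) × Euc n => g q.2) (V.prod volume) := by
  have hgint : Integrable g volume := hg.integrable_of_hasCompactSupport hgs
  have hmap : Integrable g (Measure.map Prod.snd (V.prod volume)) := by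
    rw [Measure.map_snd_prod]
    exact hgint.smul_measure (measure_ne_top V univ)
  have := (integrable_map_measure hg.aestronglyMeasurable
    measurable_snd.aemeasurable).mp hmap
  exact this

lemma integrable_shift_prod (V : Measure (Euc n × Gr n d)) [IsFiniteMeasure V]
    {E : Type*} [NormedAddCommGroup E] {g : Euc n → E} (hg : Continuous g)
    (hgs : HasCompactSupport g) :
    Integrable (fun q : (Euc n × Gr n d) × Euc n => g (q.1.1 - q.2)) (V.prod volume) := by
  have hΦ : MeasurePreserving (fun q : (Euc n × Gr n d) × Euc n => (q.1, q.1.1 - q.2))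
      (V.prod volume) (V.prod volume) := by
    exact MeasurePreserving.skew_product (μc := (volume : Measure (Euc n)))
      (μd := (volume : Measure (Euc n))) (g := fun (p : Euc n × Gr n d) (z : Euc n) => p.1 - z)
      (MeasurePreserving.id V)
      ((measurable_fst.comp measurable_fst).sub measurable_snd)
      (Eventually.of_forall fun p => (Measure.measurePreserving_sub_left volume p.1).map_eq)
  have h2 : Integrable (fun q : (Euc n × Gr n d) × Euc n => g q.2) (V.prod volume) :=
    integrable_snd_prod V hg hgs
  have h3 := (hΦ.integrable_comp h2.aestronglyMeasurable).mpr h2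
  exact h3

lemma gradient_conv {k : Euc n → ℝ} (hk1 : ContDiff ℝ 1 k) (hks : HasCompactSupport k)
    {X : Euc n → Euc n} (hX : C1c X) (j : Fin n) (y : Euc n) :
    HasGradientAt (fun w : Euc n => ∫ z, k (w - z) * X z j)
      (∫ z, X z j • gradient k (y - z)) y := by
  have hXc : Continuous X := hX.1.continuous
  have hXjc : Continuous (fun z => X z j) := (EuclideanSpace.proj j).continuous.comp hXc
  have hXjs : HasCompactSupport (fun z => X z j) :=
    hX.2.comp_left (g := fun v : Euc n => v j) rfl
  have hloc : LocallyIntegrable (fun z => X z j) volume := hXjc.locallyIntegrable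
  have hfderc : Continuous (fderiv ℝ k) := hk1.continuous_fderiv one_ne_zero
  have hgradc : Continuous (gradient k) := continuous_gradient_of_contDiff hk1
  have hder := hks.hasFDerivAt_convolution_right (ContinuousLinearMap.mul ℝ ℝ) hloc hk1 y
  have hfun : (fun w : Euc n => ∫ z, k (w - z) * X z j)
      = ((fun z => X z j) ⋆[ContinuousLinearMap.mul ℝ ℝ] k) := by
    funext w
    rw [convolution_def]
    simp only [ContinuousLinearMap.mul_apply']
    simp only [mul_comm]
  have hint1 : Integrable (fun t => X t j • fderiv ℝ k (y - t)) volume := by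
    apply Continuous.integrable_of_hasCompactSupport
    · exact hXjc.smul (hfderc.comp (continuous_const.sub continuous_id))
    · exact hXjs.smul_right
  have hint2 : Integrable (fun t => X t j • gradient k (y - t)) volume := by
    apply Continuous.integrable_of_hasCompactSupport
    · exact hXjc.smul (hgradc.comp (continuous_const.sub continuous_id))
    · exact hXjs.smul_right
  have hT : ((fun z => X z j) ⋆[(ContinuousLinearMap.mul ℝ ℝ).precompR (Euc n)]
        fderiv ℝ k) y = ∫ t, X t j • fderiv ℝ k (y - t) := by
    rw [convolution_def]
    refine integral_congr_ae (Eventually.of_forall fun t => ?_)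
    ext v
    simp [ContinuousLinearMap.precompR_apply, ContinuousLinearMap.mul_apply', smul_eq_mul]
  have heq : (InnerProductSpace.toDual ℝ (Euc n)) (∫ z, X z j • gradient k (y - z))
      = ∫ t, X t j • fderiv ℝ k (y - t) := by
    ext v
    rw [ContinuousLinearMap.integral_apply hint1]
    rw [InnerProductSpace.toDual_apply_apply, real_inner_comm, ← integral_inner hint2]
    refine integral_congr_ae (Eventually.of_forall fun z => ?_)
    beta_reduce
    rw [real_inner_smul_right, real_inner_comm, inner_gradient]
    simp [smul_eq_mul]
  rw [hasGradientAt_iff_hasFDerivAt, hfun, heq, ← hT]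
  exact hder

lemma sdiv_conv {k : Euc n → ℝ} (hk1 : ContDiff ℝ 1 k) (hks : HasCompactSupport k)
    {X : Euc n → Euc n} (hX : C1c X) (P : Gr n d) (y : Euc n) :
    sdiv P (fun w => ∫ z, k (w - z) • X z) y
      = ∫ z, ⟪X z, Gr.op P (gradient k (y - z))⟫ := by
  have hXc : Continuous X := hX.1.continuous
  have hgradc : Continuous (gradient k) := continuous_gradient_of_contDiff hk1
  have hkc : Continuous k := hk1.continuous
  have hj : ∀ j : Fin n,
      gradient (fun y' : Euc n =>
        EuclideanSpace.proj j ((fun w => ∫ z, k (w - z) • X z) y')) y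
        = ∫ z, X z j • gradient k (y - z) := by
    intro j
    have hgc := (gradient_conv hk1 hks hX j y).gradient
    rw [← hgc]
    congr 1
    funext w
    show EuclideanSpace.proj j (∫ z, k (w - z) • X z) = ∫ z, k (w - z) * X z j
    have hint : Integrable (fun z => k (w - z) • X z) volume := by
      apply Continuous.integrable_of_hasCompactSupport
      · exact ((hkc.comp (continuous_const.sub continuous_id))).smul hXc
      · exact hX.2.smul_left (f := fun z => k (w - z))
    rw [(ContinuousLinearMap.integral_comp_comm (EuclideanSpace.proj j) hint).symm]
    refine integral_congr_ae (Eventually.of_forall fun z => ?_)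
    simp [smul_eq_mul]
  unfold sdiv
  simp only [hj]
  have hint2 : ∀ j : Fin n, Integrable (fun z => X z j • gradient k (y - z)) volume := by
    intro j
    apply Continuous.integrable_of_hasCompactSupport
    · exact ((EuclideanSpace.proj j).continuous.comp hXc).smul
        (hgradc.comp (continuous_const.sub continuous_id))
    · exact (hX.2.comp_left (g := fun v : Euc n => v j) rfl).smul_right
  have hpull : ∀ j : Fin n,
      EuclideanSpace.proj j (Gr.op P (∫ z, X z j • gradient k (y - z)))
        = ∫ z, X z j * EuclideanSpace.proj j (Gr.op P (gradient k (y - z))) := by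
    intro j
    rw [(ContinuousLinearMap.integral_comp_comm (Gr.op P) (hint2 j)).symm]
    rw [(ContinuousLinearMap.integral_comp_comm (EuclideanSpace.proj j)
      ((Gr.op P).integrable_comp (hint2 j))).symm]
    refine integral_congr_ae (Eventually.of_forall fun z => ?_)
    simp [smul_eq_mul]
  simp only [hpull]
  rw [← integral_finset_sum]
  · refine integral_congr_ae (Eventually.of_forall fun z => ?_)
    beta_reduce
    rw [PiLp.inner_apply]
    simp [RCLike.inner_apply, conj_trivial, mul_comm]
  · intro j _
    apply Continuous.integrable_of_hasCompactSupport
    · exact ((EuclideanSpace.proj j).continuous.comp hXc).mul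
        ((EuclideanSpace.proj j).continuous.comp
          (continuous_op_apply continuous_const (hgradc.comp (continuous_const.sub continuous_id))))
    · exact (hX.2.comp_left (g := fun v : Euc n => v j) rfl).mul_right

end AuxProof2

/-- Proposition `expression_of_delta_V^epsilon`.
The regularized first variation `δV ∗ ρ_ε`, defined by `δV ∗ ρ_ε(X) = δV(X ∗ ρ_ε)`, is
represented by the continuous vector field `x ↦ ∫ ∇^S ρ_ε(y-x) dV(y,S)
= ε^{-(n+1)} ∫ ∇^S ρ₁((y-x)/ε) dV(y,S)`, which moreover belongs to `L¹(ℝⁿ; ℝⁿ)`. -/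
theorem statement_1 {n d : ℕ} (hd : 1 ≤ d) (hdn : d < n)
    (Ω : Set (Euc n)) (hΩ : IsOpen Ω)
    (V : Measure (Euc n × Gr n d)) [IsFiniteMeasure V]
    (hVΩ : V {p : Euc n × Gr n d | p.1 ∉ Ω} = 0)
    (ρ : ℝ → ℝ) (hρ : IsProfile n ρ) (hρC1 : ContDiff ℝ 1 ρ)
    (ε : ℝ) (hε : 0 < ε) :
    Continuous (regFV ρ ε V) ∧
    Integrable (regFV ρ ε V) volume ∧
    (∀ x : Euc n, regFV ρ ε V x
        = (ε ^ (n + 1) : ℝ)⁻¹ •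
            ∫ p, Gr.op p.2 (gradient (fun z : Euc n => ρ ‖z‖) (ε⁻¹ • (p.1 - x))) ∂V) ∧
    (∀ X : Euc n → Euc n, C1c X →
        firstVar V (fun y => ∫ z, keps n ρ ε (y - z) • X z)
          = ∫ y, ⟪X y, regFV ρ ε V y⟫) := by
  have he : ∀ s, ρ (-s) = ρ s := hρ.even
  have hsupp : ∀ s : ℝ, 1 ≤ |s| → ρ s = 0 := hρ.compact_supp
  have hk1 : ContDiff ℝ 1 (keps n ρ ε) := contDiff_keps hρC1 he hε
  have hks : HasCompactSupport (keps n ρ ε) := keps_support hsupp hε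
  have hgc : Continuous (gradient (keps n ρ ε)) := continuous_gradient_of_contDiff hk1
  have hgs : HasCompactSupport (gradient (keps n ρ ε)) := hasCompactSupport_gradient hks
  obtain ⟨C, hC⟩ := hgs.exists_bound_of_continuous hgc
  have hregFV : regFV ρ ε V
      = fun x => ∫ p, Gr.op p.2 (gradient (keps n ρ ε) (p.1 - x)) ∂V := rfl
  have hmeasV : ∀ x : Euc n,
      Continuous fun p : Euc n × Gr n d => Gr.op p.2 (gradient (keps n ρ ε) (p.1 - x)) :=
    fun x => continuous_op_apply continuous_snd (hgc.comp (continuous_fst.sub continuous_const))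
  have hboundV : ∀ (x : Euc n) (p : Euc n × Gr n d),
      ‖Gr.op p.2 (gradient (keps n ρ ε) (p.1 - x))‖ ≤ C :=
    fun x p => le_trans (Gr.op_norm_le _ _) (hC _)
  have hintV : ∀ x : Euc n,
      Integrable (fun p : Euc n × Gr n d => Gr.op p.2 (gradient (keps n ρ ε) (p.1 - x))) V := by
    intro x
    exact Integrable.mono' (integrable_const C) (hmeasV x).aestronglyMeasurable
      (Eventually.of_forall fun p => hboundV x p)
  refine ⟨?_, ?_, ?_, ?_⟩
  · -- continuity of the regularized first variation
    rw [hregFV]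
    refine continuous_of_dominated (fun x => (hmeasV x).aestronglyMeasurable)
      (fun x => Eventually.of_forall fun p => hboundV x p) (integrable_const C) ?_
    exact Eventually.of_forall fun p =>
      continuous_op_apply continuous_const (hgc.comp (continuous_const.sub continuous_id))
  · -- integrability
    have hshift := integrable_shift_prod V hgc.norm
      (hgs.comp_left (g := fun v : Euc n => ‖v‖) norm_zero)
    have hmain : Integrable (fun q : (Euc n × Gr n d) × Euc n =>
        Gr.op q.1.2 (gradient (keps n ρ ε) (q.1.1 - q.2))) (V.prod volume) := by
      refine Integrable.mono' hshift ?_ (Eventually.of_forall fun q => ?_)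
      · exact (continuous_op_apply (continuous_snd.comp continuous_fst)
          (hgc.comp ((continuous_fst.comp continuous_fst).sub
            continuous_snd))).aestronglyMeasurable
      · exact Gr.op_norm_le _ _
    have hswap : Integrable (fun q : Euc n × (Euc n × Gr n d) =>
        Gr.op q.2.2 (gradient (keps n ρ ε) (q.2.1 - q.1))) (volume.prod V) := hmain.swap
    have hfin := hswap.integral_prod_left
    rw [hregFV]
    exact hfin
  · -- scaling identity
    intro x
    rw [hregFV]
    simp only
    simp_rw [gradient_keps hρC1 he hε, _root_.map_smul]
    rw [integral_smul]
  · -- representation of the regularized first variation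
    intro X hX
    unfold firstVar
    have h1 : ∀ p : Euc n × Gr n d,
        sdiv p.2 (fun y => ∫ z, keps n ρ ε (y - z) • X z) p.1
          = ∫ z, ⟪X z, Gr.op p.2 (gradient (keps n ρ ε) (p.1 - z))⟫ :=
      fun p => sdiv_conv hk1 hks hX p.2 p.1
    simp only [h1]
    have hdom : Integrable (fun q : (Euc n × Gr n d) × Euc n => C * ‖X q.2‖)
        (V.prod volume) := by
      refine integrable_snd_prod V ((continuous_const.mul hX.1.continuous.norm)) ?_
      exact hX.2.comp_left (g := fun v : Euc n => C * ‖v‖) (by simp)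
    have huncur : Integrable (uncurry fun (p : Euc n × Gr n d) (z : Euc n) =>
        ⟪X z, Gr.op p.2 (gradient (keps n ρ ε) (p.1 - z))⟫) (V.prod volume) := by
      refine Integrable.mono' hdom ?_ (Eventually.of_forall fun q => ?_)
      · exact ((hX.1.continuous.comp continuous_snd).inner
          (continuous_op_apply (continuous_snd.comp continuous_fst)
            (hgc.comp ((continuous_fst.comp continuous_fst).sub
              continuous_snd)))).aestronglyMeasurable
      · calc ‖⟪X q.2, Gr.op q.1.2 (gradient (keps n ρ ε) (q.1.1 - q.2))⟫‖
            ≤ ‖X q.2‖ * ‖Gr.op q.1.2 (gradient (keps n ρ ε) (q.1.1 - q.2))‖ :=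
              norm_inner_le_norm _ _
          _ ≤ ‖X q.2‖ * C :=
              mul_le_mul_of_nonneg_left (le_trans (Gr.op_norm_le _ _) (hC _)) (norm_nonneg _)
          _ = C * ‖X q.2‖ := mul_comm _ _
    rw [integral_integral_swap huncur]
    refine integral_congr_ae (Eventually.of_forall fun z => ?_)
    beta_reduce
    rw [integral_inner (hintV z)]
    rfl

end VarifoldPaper
end
end

section
/- Let Ω ⊂ ℝⁿ be an open set, V a d-varifold in Ω, and (𝒦_i)_{i∈ℕ} a sequence of meshes of Ω with sizes δ_i = sup_{K∈𝒦_i} diam K. Then there exists a sequence (V_i)_i of discrete varifolds (volumetric as well as point cloud) such that for every open set U ⊂ Ω, Δ^{1,1}_U(V, V_i) ≤ δ_i ‖V‖(U^{δ_i}) + Σ_{K∈𝒦_i} min_{P∈G_{d,n}} ∫_{(U^{δ_i}∩K)×G_{d,n}} ‖P − S‖ dV(x,S). -/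
open MeasureTheory Filter Metric Set Function
open scoped ENNReal NNReal RealInnerProductSpace Topology Pointwise

noncomputable section
set_option maxHeartbeats 1000000
set_option synthInstance.maxHeartbeats 100000

namespace VarifoldPaper

instance (n d : ℕ) : SecondCountableTopology (Gr n d) := by unfold Gr; infer_instance

lemma Gr.dist_eq {n d : ℕ} (P Q : Gr n d) : dist P Q = ‖Gr.op P - Gr.op Q‖ := by
  rw [show dist P Q = dist (Gr.op P) (Gr.op Q) from rfl, dist_eq_norm]

lemma Gr.norm_op_apply_le {n d : ℕ} (P : Gr n d) (x : Euc n) : ‖Gr.op P x‖ ≤ ‖x‖ := by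
  obtain ⟨P, hsym, hidem, -⟩ := P
  show ‖P x‖ ≤ ‖x‖
  have hPP : P (P x) = P x := by
    have := congrArg (fun f : CLM n => f x) hidem
    simpa using this
  have h1 : ‖P x‖ ^ 2 = ⟪x, P x⟫ := by
    rw [← real_inner_self_eq_norm_sq]
    have h := hsym x (P x)
    rw [show ((P : Euc n →ₗ[ℝ] Euc n) x : Euc n) = P x from rfl,
      show ((P : Euc n →ₗ[ℝ] Euc n) (P x) : Euc n) = P (P x) from rfl, hPP] at h
    exact h
  have h2 : ⟪x, P x⟫ ≤ ‖x‖ * ‖P x‖ := real_inner_le_norm x (P x)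
  nlinarith [norm_nonneg (P x), norm_nonneg x]

lemma Gr.norm_op_le_one {n d : ℕ} (P : Gr n d) : ‖Gr.op P‖ ≤ 1 :=
  ContinuousLinearMap.opNorm_le_bound _ zero_le_one fun x => by
    simpa using Gr.norm_op_apply_le P x

lemma Gr.trace_eq {n d : ℕ} (P : Gr n d) :
    LinearMap.trace ℝ (Euc n) (P.val : Euc n →ₗ[ℝ] Euc n) = (d : ℝ) := by
  obtain ⟨P, hsym, hidem, hrk⟩ := P
  have hproj : LinearMap.IsProj (LinearMap.range (P : Euc n →ₗ[ℝ] Euc n))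
      (P : Euc n →ₗ[ℝ] Euc n) := by
    constructor
    · intro x; exact LinearMap.mem_range_self _ x
    · rintro x ⟨y, rfl⟩
      have : P (P y) = P y := by
        have := congrArg (fun f : CLM n => f y) hidem
        simpa using this
      exact this
  rw [hproj.trace, hrk]

lemma norm_le_one_of {n : ℕ} (P : CLM n)
    (hsym : LinearMap.IsSymmetric (P : Euc n →ₗ[ℝ] Euc n)) (hidem : P.comp P = P) :
    ‖P‖ ≤ 1 := by
  apply ContinuousLinearMap.opNorm_le_bound _ zero_le_one
  intro x
  rw [one_mul]
  have hPP : P (P x) = P x := by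
    have := congrArg (fun f : CLM n => f x) hidem
    simpa using this
  have h1 : ‖P x‖ ^ 2 = ⟪x, P x⟫ := by
    rw [← real_inner_self_eq_norm_sq]
    have h := hsym x (P x)
    rw [show ((P : Euc n →ₗ[ℝ] Euc n) x : Euc n) = P x from rfl,
      show ((P : Euc n →ₗ[ℝ] Euc n) (P x) : Euc n) = P (P x) from rfl, hPP] at h
    exact h
  have h2 : ⟪x, P x⟫ ≤ ‖x‖ * ‖P x‖ := real_inner_le_norm x (P x)
  nlinarith [norm_nonneg (P x), norm_nonneg x]

lemma gr_isCompact (n d : ℕ) :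
    IsCompact {P : CLM n | LinearMap.IsSymmetric (P : Euc n →ₗ[ℝ] Euc n) ∧ P.comp P = P ∧
      Module.finrank ℝ (LinearMap.range (P : Euc n →ₗ[ℝ] Euc n)) = d} := by
  set S := {P : CLM n | LinearMap.IsSymmetric (P : Euc n →ₗ[ℝ] Euc n) ∧ P.comp P = P ∧
      Module.finrank ℝ (LinearMap.range (P : Euc n →ₗ[ℝ] Euc n)) = d} with hS
  have hSeq : S = {P : CLM n | LinearMap.IsSymmetric (P : Euc n →ₗ[ℝ] Euc n)}
      ∩ {P : CLM n | P * P = P}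
      ∩ {P : CLM n | LinearMap.trace ℝ (Euc n) (P : Euc n →ₗ[ℝ] Euc n) = (d : ℝ)} := by
    ext P
    simp only [hS, mem_setOf_eq, mem_inter_iff]
    constructor
    · rintro ⟨hsym, hidem, hrk⟩
      refine ⟨⟨hsym, hidem⟩, ?_⟩
      exact Gr.trace_eq (⟨P, hsym, hidem, hrk⟩ : Gr n d)
    · rintro ⟨⟨hsym, hidem⟩, htr⟩
      refine ⟨hsym, hidem, ?_⟩
      have hproj : LinearMap.IsProj (LinearMap.range (P : Euc n →ₗ[ℝ] Euc n))
          (P : Euc n →ₗ[ℝ] Euc n) := by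
        constructor
        · intro x; exact LinearMap.mem_range_self _ x
        · rintro x ⟨y, rfl⟩
          have : P (P y) = P y := by
            have := congrArg (fun f : CLM n => f y) hidem
            simpa using this
          exact this
      rw [hproj.trace] at htr
      exact_mod_cast htr
  have hclosed : IsClosed S := by
    rw [hSeq]
    refine IsClosed.inter (IsClosed.inter ?_ ?_) ?_
    · have : {P : CLM n | LinearMap.IsSymmetric (P : Euc n →ₗ[ℝ] Euc n)} =
          ⋂ (x : Euc n), ⋂ (y : Euc n), {P : CLM n | ⟪P x, y⟫ = ⟪x, P y⟫} := by
        ext P; simp only [mem_setOf_eq, mem_iInter]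
        exact ⟨fun h x y => h x y, fun h x y => h x y⟩
      rw [this]
      refine isClosed_iInter fun x => isClosed_iInter fun y => isClosed_eq ?_ ?_
      · exact Continuous.inner ((ContinuousLinearMap.apply ℝ (Euc n) x).continuous)
          continuous_const
      · exact Continuous.inner continuous_const
          ((ContinuousLinearMap.apply ℝ (Euc n) y).continuous)
    · exact isClosed_eq (continuous_id.mul continuous_id) continuous_id
    · have htr : Continuous fun P : CLM n =>
          LinearMap.trace ℝ (Euc n) (P : Euc n →ₗ[ℝ] Euc n) := by
        exact LinearMap.continuous_of_finiteDimensional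
          ((LinearMap.trace ℝ (Euc n)).comp (ContinuousLinearMap.coeLM ℝ))
      exact isClosed_eq htr continuous_const
  have hbdd : Bornology.IsBounded S := by
    apply (Metric.isBounded_closedBall (x := (0 : CLM n)) (r := 1)).subset
    intro P hP
    rw [Metric.mem_closedBall, dist_zero_right]
    exact norm_le_one_of P hP.1 hP.2.1
  exact Metric.isCompact_of_isClosed_isBounded hclosed hbdd

instance (n d : ℕ) : CompactSpace (Gr n d) := by
  unfold Gr; exact isCompact_iff_compactSpace.mp (gr_isCompact n d)

lemma gr_nonempty {n d : ℕ} (h : d ≤ n) : Nonempty (Gr n d) := by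
  classical
  set v : Fin d → Euc n := fun i => EuclideanSpace.single (Fin.castLE h i) (1 : ℝ) with hv
  have hli : LinearIndependent ℝ v := by
    have hb := (EuclideanSpace.basisFun (Fin n) ℝ).toBasis.linearIndependent
    have : v = (EuclideanSpace.basisFun (Fin n) ℝ).toBasis ∘ Fin.castLE h := by
      funext i
      simp [hv, EuclideanSpace.basisFun_apply, OrthonormalBasis.coe_toBasis]
    rw [this]
    exact hb.comp _ (Fin.castLE_injective h)
  set U : Submodule ℝ (Euc n) := Submodule.span ℝ (Set.range v) with hU
  have hfr : Module.finrank ℝ U = d := by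
    rw [hU, finrank_span_eq_card hli, Fintype.card_fin]
  set P : CLM n := U.subtypeL.comp (U.orthogonalProjectionOnto) with hP
  have hsym : LinearMap.IsSymmetric ((P : CLM n) : Euc n →ₗ[ℝ] Euc n) :=
    U.starProjection_isSymmetric
  have hidem : P.comp P = P := by
    ext x
    simp only [ContinuousLinearMap.comp_apply, hP]
    simp [Submodule.orthogonalProjectionOnto_mem_subspace_eq_self]
    rw [Submodule.starProjection_eq_self_iff.mpr (U.starProjection_apply_mem x)]
  have hrange : LinearMap.range ((P : CLM n) : Euc n →ₗ[ℝ] Euc n) = U := by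
    apply le_antisymm
    · rintro x ⟨y, rfl⟩
      exact (U.orthogonalProjectionOnto y).2
    · intro x hx
      exact ⟨x, by exact Submodule.starProjection_eq_self_iff.mpr hx⟩
  exact ⟨⟨P, hsym, hidem, by rw [hrange, hfr]⟩⟩

lemma subset_thickening_of_inter {n : ℕ} {δ : ℝ} (hδ : 0 < δ) {U Kk : Set (Euc n)}
    (hU : IsOpen U) (hK : EMetric.diam Kk ≤ ENNReal.ofReal δ)
    (hne : (Kk ∩ U).Nonempty) : Kk ⊆ Metric.thickening δ U := by
  obtain ⟨y, hyK, hyU⟩ := hne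
  intro x hx
  rw [Metric.mem_thickening_iff]
  have hdxy : dist x y ≤ δ :=
    (edist_le_ofReal hδ.le).mp ((EMetric.edist_le_diam_of_mem hx hyK).trans hK)
  rcases lt_or_eq_of_le hdxy with hlt | heq
  · exact ⟨y, hyU, hlt⟩
  · -- dist x y = δ > 0; move y slightly toward x within U
    obtain ⟨ε, hε, hball⟩ := Metric.isOpen_iff.mp hU y hyU
    set t : ℝ := min (ε / (2 * δ)) (1 / 2) with ht
    have ht0 : 0 < t := lt_min (div_pos hε (by linarith)) (by norm_num)
    have ht1 : t ≤ 1 / 2 := min_le_right _ _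
    set y' : Euc n := y + t • (x - y) with hy'
    have hy'U : y' ∈ U := by
      apply hball
      rw [Metric.mem_ball, dist_eq_norm]
      have : y' - y = t • (x - y) := by rw [hy']; abel
      rw [this, norm_smul, Real.norm_eq_abs, abs_of_pos ht0]
      have hxy : ‖x - y‖ = δ := by rw [← dist_eq_norm, heq]
      rw [hxy]
      calc t * δ ≤ ε / (2 * δ) * δ := by
            apply mul_le_mul_of_nonneg_right (min_le_left _ _) hδ.le
      _ = ε / 2 := by field_simp
      _ < ε := by linarith
    refine ⟨y', hy'U, ?_⟩
    rw [dist_eq_norm]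
    have : x - y' = (1 - t) • (x - y) := by
      rw [hy', sub_smul, one_smul]; abel
    rw [this, norm_smul, Real.norm_eq_abs, abs_of_pos (by linarith : (0:ℝ) < 1 - t)]
    have hxy : ‖x - y‖ = δ := by rw [← dist_eq_norm, heq]
    rw [hxy]
    nlinarith

lemma not_countable_open {n : ℕ} (hn : 0 < n) {Ω : Set (Euc n)} (hΩ : IsOpen Ω)
    (hne : Ω.Nonempty) : ¬ Ω.Countable := by
  intro hc
  obtain ⟨x, hx⟩ := hne
  obtain ⟨ε, hε, hball⟩ := Metric.isOpen_iff.mp hΩ x hx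
  set v : Euc n := EuclideanSpace.single (⟨0, hn⟩ : Fin n) (1 : ℝ) with hv
  have hvnorm : ‖v‖ = 1 := by rw [hv, EuclideanSpace.norm_single]; norm_num
  set f : ℝ → Euc n := fun t => x + t • v with hf
  have hinj : Function.Injective f := by
    intro s t hst
    have : (s - t) • v = 0 := by
      have h1 : s • v - t • v = 0 := by
        have := sub_eq_zero_of_eq hst
        rw [hf] at this; simpa using this
      rw [sub_smul]; exact h1
    by_contra hne
    have : v = 0 := by
      rcases smul_eq_zero.mp this with h | h
      · exact absurd (sub_eq_zero.mp h) hne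
      · exact h
    rw [← norm_eq_zero] at this
    rw [hvnorm] at this; norm_num at this
  have hmaps : Set.Ioo (0:ℝ) ε ⊆ f ⁻¹' Ω := by
    intro t ht
    apply hball
    rw [Metric.mem_ball, dist_eq_norm]
    have : f t - x = t • v := by rw [hf]; simp
    rw [this, norm_smul, Real.norm_eq_abs, abs_of_pos ht.1, hvnorm, mul_one]
    exact ht.2
  have hcnt : (Set.Ioo (0:ℝ) ε).Countable := (hc.preimage hinj).mono hmaps
  have := hcnt.measure_zero (volume : Measure ℝ)
  rw [Real.volume_Ioo] at this
  simp only [ENNReal.ofReal_eq_zero, sub_zero] at this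
  linarith


lemma key {n d : ℕ} (hdn : d < n)
    (Ω : Set (Euc n))
    (V : Measure (Euc n × Gr n d))
    (hVΩ : V {p : Euc n × Gr n d | p.1 ∉ Ω} = 0)
    (hVloc : IsLocallyFiniteMeasure V)
    {ι : Type} [Countable ι] (Ki : ι → Set (Euc n))
    (hcover : ⋃ k, Ki k = Ω)
    (δi : ℝ) (hδpos : 0 < δi)
    (hδ : ∀ k, EMetric.diam (Ki k) ≤ ENNReal.ofReal δi) :
    ∃ W : Measure (Euc n × Gr n d), IsPointCloudOn Ki W ∧
      ∀ U : Set (Euc n), IsOpen U → U ⊆ Ω →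
        ENNReal.ofReal (BL U V W) ≤ ENNReal.ofReal δi * mass V (Metric.thickening δi U)
            + ∑' k : ι, ⨅ P : Gr n d,
                ∫⁻ p in (Metric.thickening δi U ∩ Ki k) ×ˢ (univ : Set (Gr n d)),
                  ENNReal.ofReal ‖Gr.op P - Gr.op p.2‖ ∂V := by
  classical
  haveI : Nonempty (Gr n d) := gr_nonempty (le_of_lt hdn)
  haveI : SigmaFinite V := by infer_instance
  obtain ⟨en, hen⟩ : ∃ f : ι → ℕ, Function.Injective f := exists_injective_nat ι
  set E : ι → Set (Euc n × Gr n d) := fun k => toMeasurable V (Ki k ×ˢ univ) with hE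
  set B : ι → Set (Euc n × Gr n d) :=
    fun k => E k \ ⋃ (j) (_ : en j < en k), E j with hB
  have hEm : ∀ k, MeasurableSet (E k) := fun k => measurableSet_toMeasurable _ _
  have hBm : ∀ k, MeasurableSet (B k) := fun k =>
    (hEm k).diff (MeasurableSet.iUnion fun j => MeasurableSet.iUnion fun _ => hEm j)
  have hBsub : ∀ k, B k ⊆ E k := fun k => diff_subset
  have hBdisj : Pairwise (Function.onFun Disjoint B) := by
    intro j k hjk
    rcases lt_or_gt_of_ne (fun h => hjk (hen h)) with h | h
    · exact Set.disjoint_left.mpr fun p hpj hpk =>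
        hpk.2 (mem_iUnion.mpr ⟨j, mem_iUnion.mpr ⟨h, hpj.1⟩⟩)
    · exact Set.disjoint_left.mpr fun p hpj hpk =>
        hpj.2 (mem_iUnion.mpr ⟨k, mem_iUnion.mpr ⟨h, hpk.1⟩⟩)
  have hBU : (⋃ k, E k) ⊆ ⋃ k, B k := by
    intro p hp
    have hne : {m : ℕ | ∃ j, en j = m ∧ p ∈ E j}.Nonempty := by
      obtain ⟨k, hk⟩ := mem_iUnion.mp hp
      exact ⟨en k, k, rfl, hk⟩
    obtain ⟨j0, hj0, hpj0⟩ := Nat.sInf_mem hne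
    refine mem_iUnion.mpr ⟨j0, hpj0, ?_⟩
    intro hmem
    obtain ⟨j, hj⟩ := mem_iUnion.mp hmem
    obtain ⟨hlt, hpj⟩ := mem_iUnion.mp hj
    have : en j ∈ {m : ℕ | ∃ j, en j = m ∧ p ∈ E j} := ⟨j, rfl, hpj⟩
    have := Nat.sInf_le this
    omega
  have hcompl : V ((⋃ k, B k)ᶜ) = 0 := by
    apply measure_mono_null _ hVΩ
    intro p hp
    simp only [mem_compl_iff] at hp
    intro hpΩ
    apply hp
    apply hBU
    rw [← hcover] at hpΩ
    obtain ⟨k, hk⟩ := mem_iUnion.mp hpΩ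
    exact mem_iUnion.mpr ⟨k, subset_toMeasurable V _ (by exact ⟨hk, mem_univ _⟩)⟩
  have hnull : ∀ (k : ι) (t : Set (Euc n × Gr n d)), MeasurableSet t →
      t ∩ (Ki k ×ˢ univ) = ∅ → V (t ∩ B k) = 0 := by
    intro k t ht hdis
    have h1 : V (t ∩ B k) ≤ V (E k ∩ t) :=
      measure_mono fun p hp => ⟨hBsub k hp.2, hp.1⟩
    have h2 : V (E k ∩ t) = V ((Ki k ×ˢ univ) ∩ t) := by
      simp only [hE]
      exact Measure.measure_toMeasurable_inter_of_sFinite ht _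
    rw [h2, inter_comm (Ki k ×ˢ univ) t, hdis, measure_empty] at h1
    exact le_antisymm h1 zero_le
  have hrle : ∀ (k : ι) (t : Set (Euc n × Gr n d)), MeasurableSet t →
      V (t ∩ B k) ≤ V (t ∩ (Ki k ×ˢ univ)) := by
    intro k t ht
    set F := toMeasurable V (t ∩ (Ki k ×ˢ univ)) with hF
    have hFm : MeasurableSet F := measurableSet_toMeasurable _ _
    have hsplit : t ∩ B k ⊆ ((t \ F) ∩ B k) ∪ F := by
      intro p hp
      by_cases hpF : p ∈ F
      · exact Or.inr hpF
      · exact Or.inl ⟨⟨hp.1, hpF⟩, hp.2⟩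
    have hz : V ((t \ F) ∩ B k) = 0 := by
      apply hnull k _ (ht.diff hFm)
      ext p
      simp only [mem_inter_iff, mem_diff, mem_empty_iff_false, iff_false, not_and]
      intro hp hpK
      exact (hp.2 (subset_toMeasurable V _ ⟨hp.1, hpK⟩)).elim
    calc V (t ∩ B k) ≤ V (((t \ F) ∩ B k) ∪ F) := measure_mono hsplit
    _ ≤ V ((t \ F) ∩ B k) + V F := measure_union_le _ _
    _ = V (t ∩ (Ki k ×ˢ univ)) := by rw [hz, zero_add, hF, measure_toMeasurable]
  -- data of the point cloud
  set xp : ι → Euc n := fun k => if h : (Ki k).Nonempty then h.choose else Classical.arbitrary _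
    with hxp
  set F : ι → Gr n d → ℝ≥0∞ := fun k P =>
    ∫⁻ p in (Ki k) ×ˢ (univ : Set (Gr n d)), ENNReal.ofReal ‖Gr.op P - Gr.op p.2‖ ∂V with hFdef
  set Pk : ι → Gr n d := fun k =>
    if h : ∃ P, ∀ Q, F k P ≤ F k Q then h.choose else Classical.arbitrary _ with hPk
  set m : ι → ℝ≥0 := fun k => (V (B k)).toNNReal with hm
  have hxpmem : ∀ k, (Ki k).Nonempty → xp k ∈ Ki k := by
    intro k h
    simp only [hxp, dif_pos h]
    exact h.choose_spec
  have hmzero : ∀ k, Ki k = ∅ → m k = 0 := by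
    intro k h
    have : V (B k) ≤ V (E k) := measure_mono (hBsub k)
    have hEk : V (E k) = 0 := by
      simp only [hE]
      rw [measure_toMeasurable]
      simp [h]
    have hz : V (B k) = 0 := le_antisymm (hEk ▸ this) zero_le
    simp [hm, hz]
  refine ⟨Measure.sum (fun k => ((m k : ℝ≥0∞)) • Measure.dirac (xp k, Pk k)),
    ⟨m, xp, Pk, hxpmem, hmzero, rfl⟩, ?_⟩
  set W : Measure (Euc n × Gr n d) :=
    Measure.sum (fun k => ((m k : ℝ≥0∞)) • Measure.dirac (xp k, Pk k)) with hW
  intro U hUopen hUΩ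
  set Tδ : Set (Euc n) := Metric.thickening δi U with hTδ
  have hTδm : MeasurableSet Tδ := Metric.isOpen_thickening.measurableSet
  set T' : Set (Euc n × Gr n d) := Prod.fst ⁻¹' Tδ with hT'
  have hT'm : MeasurableSet T' := hTδm.preimage measurable_fst
  set RHS : ℝ≥0∞ := ENNReal.ofReal δi * mass V Tδ
      + ∑' k : ι, ⨅ P : Gr n d,
          ∫⁻ p in (Tδ ∩ Ki k) ×ˢ (univ : Set (Gr n d)),
            ENNReal.ofReal ‖Gr.op P - Gr.op p.2‖ ∂V with hRHS
  rcases eq_or_ne RHS ⊤ with htop | hRne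
  · rw [htop]; exact le_top
  have hmassT : mass V Tδ = V T' := by
    simp only [mass, hT']
    rw [Measure.map_apply measurable_fst hTδm]
  have hVT'fin : V T' ≠ ⊤ := by
    intro hcon
    apply hRne
    rw [hRHS]
    rw [hmassT, hcon, ENNReal.mul_top (by simp [ENNReal.ofReal_eq_zero]; linarith)]
    simp
  -- the decomposition of V over the pieces B k, restricted to T'
  set ν : ι → Measure (Euc n × Gr n d) := fun k => V.restrict (T' ∩ B k) with hν
  have hνuniv : ∀ k, ν k univ = V (T' ∩ B k) := by
    intro k; simp only [hν, Measure.restrict_apply_univ]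
  have hfinTB : ∀ k, V (T' ∩ B k) ≠ ⊤ :=
    fun k => ne_top_of_le_ne_top hVT'fin (measure_mono inter_subset_left)
  haveI hνinst : ∀ k, IsFiniteMeasure (ν k) := by
    intro k
    refine ⟨?_⟩
    rw [hνuniv k]
    exact lt_top_iff_ne_top.mpr (hfinTB k)
  set μ' : Measure (Euc n × Gr n d) := V.restrict T' with hμ'
  haveI : IsFiniteMeasure μ' := by
    refine ⟨?_⟩
    rw [hμ', Measure.restrict_apply_univ]
    exact lt_top_iff_ne_top.mpr hVT'fin
  have hμ'sum : μ' = Measure.sum ν := by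
    have h1 : T' =ᵐ[V] ((T' ∩ ⋃ k, B k : Set (Euc n × Gr n d))) := by
      rw [MeasureTheory.ae_eq_set]
      constructor
      · apply measure_mono_null _ hcompl
        intro p hp
        simp only [mem_diff, mem_inter_iff, not_and] at hp
        exact fun hc => (hp.2 hp.1) hc
      · simp [diff_eq_empty.mpr inter_subset_left]
    rw [hμ', Measure.restrict_congr_set h1, inter_iUnion,
      Measure.restrict_iUnion
        (fun j k hjk => ((hBdisj hjk).mono inter_subset_right inter_subset_right))
        (fun k => hT'm.inter (hBm k))]
  -- cells meeting U
  have hKsub : ∀ k, (Ki k ∩ U).Nonempty → Ki k ⊆ Tδ :=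
    fun k h => subset_thickening_of_inter hδpos hUopen (hδ k) h
  have hKT' : ∀ k, (Ki k ∩ U).Nonempty → (Ki k ×ˢ (univ : Set (Gr n d))) ⊆ T' :=
    fun k h p hp => hKsub k h hp.1
  have hVBk : ∀ k, (Ki k ∩ U).Nonempty → V (B k) = V (T' ∩ B k) := by
    intro k hk
    have h1 : V (B k ∩ T') + V (B k \ T') = V (B k) := measure_inter_add_diff (B k) hT'm
    have h2 : V (B k \ T') = 0 := by
      rw [diff_eq, inter_comm]
      apply hnull k T'ᶜ hT'm.compl
      ext p
      simp only [mem_inter_iff, mem_compl_iff, mem_empty_iff_false, iff_false, not_and]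
      exact fun hp hpK => (hp (hKT' k hk hpK)).elim
    rw [h2, add_zero] at h1
    rw [← h1, inter_comm]
  have hVBzero : ∀ k, Ki k = ∅ → V (B k) = 0 := by
    intro k h
    have h1 : V (B k) ≤ V (E k) := measure_mono (hBsub k)
    have hEk : V (E k) = 0 := by
      simp only [hE]; rw [measure_toMeasurable]; simp [h]
    exact le_antisymm (hEk ▸ h1) zero_le
  -- the chosen planes minimize F k
  have hFfin : ∀ k, (Ki k ∩ U).Nonempty → ∀ P, F k P ≠ ⊤ := by
    intro k hk P
    have hb : ∀ p : Euc n × Gr n d, ENNReal.ofReal ‖Gr.op P - Gr.op p.2‖ ≤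
        ENNReal.ofReal 2 := by
      intro p
      apply ENNReal.ofReal_le_ofReal
      calc ‖Gr.op P - Gr.op p.2‖ ≤ ‖Gr.op P‖ + ‖Gr.op p.2‖ := norm_sub_le _ _
      _ ≤ 1 + 1 := add_le_add (Gr.norm_op_le_one P) (Gr.norm_op_le_one p.2)
      _ = 2 := by norm_num
    have : F k P ≤ ENNReal.ofReal 2 * V (Ki k ×ˢ (univ : Set (Gr n d))) := by
      simp only [hFdef]
      calc (∫⁻ p in (Ki k) ×ˢ (univ : Set (Gr n d)),
            ENNReal.ofReal ‖Gr.op P - Gr.op p.2‖ ∂V)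
          ≤ ∫⁻ _ in (Ki k) ×ˢ (univ : Set (Gr n d)), ENNReal.ofReal 2 ∂V :=
            lintegral_mono fun p => hb p
      _ = ENNReal.ofReal 2 * V (Ki k ×ˢ (univ : Set (Gr n d))) := by
            rw [MeasureTheory.setLIntegral_const]
    refine ne_top_of_le_ne_top ?_ this
    exact ENNReal.mul_ne_top ENNReal.ofReal_ne_top
      (ne_top_of_le_ne_top hVT'fin (measure_mono (hKT' k hk)))
  have hmin : ∀ k, (Ki k ∩ U).Nonempty → ∃ P, ∀ Q, F k P ≤ F k Q := by
    intro k hk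
    set M : ℝ≥0∞ := V (Ki k ×ˢ (univ : Set (Gr n d))) with hM
    have hMfin : M ≠ ⊤ := ne_top_of_le_ne_top hVT'fin (measure_mono (hKT' k hk))
    have hFle : ∀ P Q : Gr n d, F k P ≤ F k Q + ENNReal.ofReal (dist P Q) * M := by
      intro P Q
      simp only [hFdef]
      have hpt : ∀ p : Euc n × Gr n d, ENNReal.ofReal ‖Gr.op P - Gr.op p.2‖ ≤
          ENNReal.ofReal ‖Gr.op Q - Gr.op p.2‖ + ENNReal.ofReal (dist P Q) := by
        intro p
        have h1 : ‖Gr.op P - Gr.op p.2‖ ≤ ‖Gr.op Q - Gr.op p.2‖ + dist P Q := by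
          rw [Gr.dist_eq]
          have h := dist_triangle (Gr.op P) (Gr.op Q) (Gr.op p.2)
          simp only [dist_eq_norm] at h
          linarith
        calc ENNReal.ofReal ‖Gr.op P - Gr.op p.2‖
            ≤ ENNReal.ofReal (‖Gr.op Q - Gr.op p.2‖ + dist P Q) :=
              ENNReal.ofReal_le_ofReal h1
        _ ≤ ENNReal.ofReal ‖Gr.op Q - Gr.op p.2‖ + ENNReal.ofReal (dist P Q) :=
              ENNReal.ofReal_add_le
      calc (∫⁻ p in (Ki k) ×ˢ (univ : Set (Gr n d)),
            ENNReal.ofReal ‖Gr.op P - Gr.op p.2‖ ∂V)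
          ≤ ∫⁻ p in (Ki k) ×ˢ (univ : Set (Gr n d)),
              (ENNReal.ofReal ‖Gr.op Q - Gr.op p.2‖ + ENNReal.ofReal (dist P Q)) ∂V :=
            lintegral_mono fun p => hpt p
      _ = (∫⁻ p in (Ki k) ×ˢ (univ : Set (Gr n d)),
              ENNReal.ofReal ‖Gr.op Q - Gr.op p.2‖ ∂V) + ENNReal.ofReal (dist P Q) * M := by
            rw [lintegral_add_right _ measurable_const, MeasureTheory.setLIntegral_const]
    set f : Gr n d → ℝ := fun P => (F k P).toReal with hf
    have hfle : ∀ P Q : Gr n d, f P - f Q ≤ M.toReal * dist P Q := by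
      intro P Q
      have h1 := hFle P Q
      have h2 : (F k P).toReal ≤ (F k Q).toReal + (ENNReal.ofReal (dist P Q) * M).toReal := by
        rw [← ENNReal.toReal_add (hFfin k hk Q)
          (ENNReal.mul_ne_top ENNReal.ofReal_ne_top hMfin)]
        exact ENNReal.toReal_mono
          (ENNReal.add_ne_top.mpr ⟨hFfin k hk Q,
            ENNReal.mul_ne_top ENNReal.ofReal_ne_top hMfin⟩) h1
      have h3 : (ENNReal.ofReal (dist P Q) * M).toReal = M.toReal * dist P Q := by
        rw [ENNReal.toReal_mul, ENNReal.toReal_ofReal dist_nonneg, mul_comm]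
      simp only [hf]
      linarith [h2, h3.le]
    have hlip : LipschitzWith (Real.toNNReal M.toReal) f := by
      apply LipschitzWith.of_dist_le_mul
      intro P Q
      rw [Real.dist_eq]
      rw [abs_sub_le_iff]
      constructor
      · have := hfle P Q
        rw [Real.coe_toNNReal _ ENNReal.toReal_nonneg]
        exact this
      · have := hfle Q P
        rw [Real.coe_toNNReal _ ENNReal.toReal_nonneg]
        rw [dist_comm] at this
        exact this
    obtain ⟨P0, -, hP0⟩ := isCompact_univ.exists_isMinOn (univ_nonempty)
      hlip.continuous.continuousOn
    refine ⟨P0, fun Q => ?_⟩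
    have hfQ : f P0 ≤ f Q := isMinOn_iff.mp hP0 Q (mem_univ Q)
    calc F k P0 = ENNReal.ofReal (f P0) := by
          rw [hf, ENNReal.ofReal_toReal (hFfin k hk P0)]
    _ ≤ ENNReal.ofReal (f Q) := ENNReal.ofReal_le_ofReal hfQ
    _ = F k Q := by rw [hf, ENNReal.ofReal_toReal (hFfin k hk Q)]
  have hPkmin : ∀ k, (Ki k ∩ U).Nonempty → ∀ Q, F k (Pk k) ≤ F k Q := by
    intro k hk
    have h := hmin k hk
    simp only [hPk]
    rw [dif_pos h]
    exact h.choose_spec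
  -- the per-cell tangent error
  set L : ι → ℝ≥0∞ := fun k =>
    ∫⁻ p, ENNReal.ofReal ‖Gr.op (Pk k) - Gr.op p.2‖ ∂(ν k) with hL
  have hνle : ∀ k, ν k ≤ V.restrict ((Ki k) ×ˢ (univ : Set (Gr n d))) := by
    intro k
    refine Measure.le_iff.mpr fun t ht => ?_
    simp only [hν]
    rw [Measure.restrict_apply ht, Measure.restrict_apply ht]
    rw [← inter_assoc]
    calc V ((t ∩ T') ∩ B k) ≤ V ((t ∩ T') ∩ (Ki k ×ˢ univ)) :=
          hrle k (t ∩ T') (ht.inter hT'm)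
    _ ≤ V (t ∩ (Ki k ×ˢ univ)) := measure_mono fun p hp => ⟨hp.1.1, hp.2⟩
  have hLle : ∀ k, L k ≤ F k (Pk k) := fun k => lintegral_mono' (hνle k) le_rfl
  have hLfin : ∀ k, (Ki k ∩ U).Nonempty → L k ≠ ⊤ :=
    fun k hk => ne_top_of_le_ne_top (hFfin k hk (Pk k)) (hLle k)
  have hLmin : ∀ k, (Ki k ∩ U).Nonempty →
      L k ≤ ⨅ P : Gr n d, ∫⁻ p in (Tδ ∩ Ki k) ×ˢ (univ : Set (Gr n d)),
        ENNReal.ofReal ‖Gr.op P - Gr.op p.2‖ ∂V := by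
    intro k hk
    rw [inter_eq_self_of_subset_right (hKsub k hk)]
    exact le_iInf fun Q => (hLle k).trans (hPkmin k hk Q)
  set c : ι → ℝ≥0∞ := fun k =>
    if (Ki k ∩ U).Nonempty then ENNReal.ofReal δi * V (T' ∩ B k) + L k else 0 with hc
  have hcfin : ∀ k, c k ≠ ⊤ := by
    intro k
    by_cases hk : (Ki k ∩ U).Nonempty
    · simp only [hc, if_pos hk]
      exact ENNReal.add_ne_top.mpr
        ⟨ENNReal.mul_ne_top ENNReal.ofReal_ne_top (hfinTB k), hLfin k hk⟩
    · simp [hc, if_neg hk]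
  have hsumB : (∑' k, V (T' ∩ B k)) ≤ V T' := by
    rw [← measure_iUnion
      (fun j k hjk => ((hBdisj hjk).mono inter_subset_right inter_subset_right))
      (fun k => hT'm.inter (hBm k))]
    exact measure_mono (iUnion_subset fun k => inter_subset_left)
  have hsumc : (∑' k, c k) ≤ RHS := by
    have h1 : ∀ k, c k ≤ ENNReal.ofReal δi * V (T' ∩ B k) +
        (if (Ki k ∩ U).Nonempty then L k else 0) := by
      intro k
      by_cases hk : (Ki k ∩ U).Nonempty
      · simp [hc, if_pos hk]
      · simp [hc, if_neg hk]
    calc (∑' k, c k) ≤ ∑' k, (ENNReal.ofReal δi * V (T' ∩ B k) +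
        (if (Ki k ∩ U).Nonempty then L k else 0)) := ENNReal.tsum_le_tsum h1
    _ = ENNReal.ofReal δi * (∑' k, V (T' ∩ B k)) +
        ∑' k, (if (Ki k ∩ U).Nonempty then L k else 0) := by
          rw [ENNReal.tsum_add, ENNReal.tsum_mul_left]
    _ ≤ ENNReal.ofReal δi * mass V Tδ + ∑' k : ι, ⨅ P : Gr n d,
          ∫⁻ p in (Tδ ∩ Ki k) ×ˢ (univ : Set (Gr n d)),
            ENNReal.ofReal ‖Gr.op P - Gr.op p.2‖ ∂V := by
          apply add_le_add
          · rw [hmassT]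
            exact mul_le_mul_right hsumB _
          · apply ENNReal.tsum_le_tsum
            intro k
            by_cases hk : (Ki k ∩ U).Nonempty
            · rw [if_pos hk]; exact hLmin k hk
            · rw [if_neg hk]; exact zero_le
    _ = RHS := by rw [hRHS]
  have hsumcne : (∑' k, c k) ≠ ⊤ := ne_top_of_le_ne_top hRne hsumc
  have hsummc : Summable fun k => (c k).toReal := ENNReal.summable_toReal hsumcne
  -- now the sup over Lipschitz test functions
  refine ENNReal.ofReal_le_of_le_toReal (Real.sSup_le ?_ ENNReal.toReal_nonneg)
  rintro r ⟨φ, hφlip, hφabs, hφsupp, rfl⟩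
  have hφcont : Continuous φ := hφlip.continuous
  have hφnorm : ∀ p, ‖φ p‖ ≤ 1 := fun p => by rw [Real.norm_eq_abs]; exact hφabs p
  have hφsupp' : ∀ p : Euc n × Gr n d, p ∉ T' → φ p = 0 := by
    intro p hp
    by_contra hne
    have hmem : p ∈ U ×ˢ (univ : Set (Gr n d)) :=
      hφsupp (subset_tsupport φ (mem_support.mpr hne))
    exact hp (Metric.self_subset_thickening hδpos U hmem.1)
  have hVμ' : ∫ p, φ p ∂V = ∫ p, φ p ∂μ' := by
    have heq : ∀ p, φ p = T'.indicator φ p := by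
      intro p
      by_cases hp : p ∈ T'
      · rw [indicator_of_mem hp]
      · rw [indicator_of_notMem hp, hφsupp' p hp]
    calc ∫ p, φ p ∂V = ∫ p, T'.indicator φ p ∂V :=
          integral_congr_ae (Filter.Eventually.of_forall heq)
    _ = ∫ p, φ p ∂μ' := by rw [integral_indicator hT'm, hμ']
  set a : ι → ℝ := fun k => ∫ p, φ p ∂(ν k) with ha
  set b : ι → ℝ := fun k =>
    ∫ p, φ p ∂(((m k : ℝ≥0∞)) • Measure.dirac (xp k, Pk k)) with hb
  have hbeq : ∀ k, b k = (V (B k)).toReal * φ (xp k, Pk k) := by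
    intro k
    simp only [hb, integral_smul_measure, integral_dirac, smul_eq_mul, hm,
      ENNReal.coe_toReal]
    rfl
  have hφintμ' : Integrable φ μ' :=
    Integrable.mono' (integrable_const 1) hφcont.aestronglyMeasurable
      (Filter.Eventually.of_forall hφnorm)
  have hφintν : Integrable φ (Measure.sum ν) := by rw [← hμ'sum]; exact hφintμ'
  have hVsum : HasSum a (∫ p, φ p ∂μ') := by
    rw [hμ'sum]
    exact hasSum_integral_measure hφintν
  have hφintW : Integrable φ W := by
    refine ⟨hφcont.aestronglyMeasurable, ?_⟩
    have hcalc : (∫⁻ p, (‖φ p‖₊ : ℝ≥0∞) ∂W) =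
        ∑' k, (m k : ℝ≥0∞) * (‖φ (xp k, Pk k)‖₊ : ℝ≥0∞) := by
      rw [hW, lintegral_sum_measure]
      congr 1
      funext k
      rw [lintegral_smul_measure, lintegral_dirac, smul_eq_mul]
    have hbk : ∀ k, (m k : ℝ≥0∞) * (‖φ (xp k, Pk k)‖₊ : ℝ≥0∞) ≤ V (T' ∩ B k) := by
      intro k
      by_cases hk : (Ki k ∩ U).Nonempty
      · have h1 : (‖φ (xp k, Pk k)‖₊ : ℝ≥0∞) ≤ 1 := by
          rw [show ((1:ℝ≥0∞)) = ((1:ℝ≥0):ℝ≥0∞) from rfl, ENNReal.coe_le_coe,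
            ← NNReal.coe_le_coe]
          simpa [coe_nnnorm] using hφnorm (xp k, Pk k)
        calc (m k : ℝ≥0∞) * (‖φ (xp k, Pk k)‖₊ : ℝ≥0∞) ≤ (m k : ℝ≥0∞) * 1 :=
              mul_le_mul_right h1 _
        _ = (m k : ℝ≥0∞) := mul_one _
        _ ≤ V (B k) := by simp only [hm]; exact ENNReal.coe_toNNReal_le_self
        _ = V (T' ∩ B k) := hVBk k hk
      · rcases eq_empty_or_nonempty (Ki k) with he | hne
        · have : m k = 0 := hmzero k he
          rw [this]
          simp
        · have hxU : xp k ∉ U := by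
            intro hmem
            exact hk ⟨xp k, hxpmem k hne, hmem⟩
          have hφ0 : φ (xp k, Pk k) = 0 := by
            by_contra hne'
            exact hxU (hφsupp (subset_tsupport φ (mem_support.mpr hne'))).1
          rw [hφ0]
          simp
    rw [hasFiniteIntegral_def]
    change (∫⁻ p, (‖φ p‖₊ : ℝ≥0∞) ∂W) < ⊤
    rw [hcalc]
    calc (∑' k, (m k : ℝ≥0∞) * (‖φ (xp k, Pk k)‖₊ : ℝ≥0∞)) ≤ ∑' k, V (T' ∩ B k) :=
          ENNReal.tsum_le_tsum hbk
    _ ≤ V T' := hsumB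
    _ < ⊤ := lt_top_iff_ne_top.mpr hVT'fin
  have hWsum : HasSum b (∫ p, φ p ∂W) := by
    rw [hW]
    exact hasSum_integral_measure (by rw [← hW]; exact hφintW)
  have htotal : HasSum (fun k => a k - b k) ((∫ p, φ p ∂μ') - ∫ p, φ p ∂W) :=
    hVsum.sub hWsum
  -- the per-cell estimate
  have hab : ∀ k, |a k - b k| ≤ (c k).toReal := by
    intro k
    by_cases hk : (Ki k ∩ U).Nonempty
    · have hKne : (Ki k).Nonempty := ⟨hk.choose, hk.choose_spec.1⟩
      have hxpK : xp k ∈ Ki k := hxpmem k hKne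
      set q : Euc n × Gr n d := (xp k, Pk k) with hq
      have hbk : b k = ((ν k) univ).toReal * φ q := by
        rw [hbeq k, hVBk k hk, hνuniv k]
      have hφintν : Integrable φ (ν k) :=
        Integrable.mono' (integrable_const 1) hφcont.aestronglyMeasurable
          (Filter.Eventually.of_forall hφnorm)
      have key0 : a k - b k = ∫ p, (φ p - φ q) ∂(ν k) := by
        rw [integral_sub hφintν (integrable_const _), integral_const, hbk, smul_eq_mul, ha, measureReal_def]
      have hae : ∀ᵐ p ∂(ν k), ENNReal.ofReal ‖φ p - φ q‖ ≤
          ENNReal.ofReal δi + ENNReal.ofReal ‖Gr.op (Pk k) - Gr.op p.2‖ := by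
        have hNm : MeasurableSet {p : Euc n × Gr n d | δi < dist p.1 (xp k)} :=
          measurableSet_lt measurable_const
            ((continuous_fst.dist continuous_const).measurable)
        have hNnull : ν k {p : Euc n × Gr n d | δi < dist p.1 (xp k)} = 0 := by
          simp only [hν]
          rw [Measure.restrict_apply hNm, ← inter_assoc]
          apply hnull k _ (hNm.inter hT'm)
          rw [eq_empty_iff_forall_notMem]
          rintro p ⟨⟨hpN, hpT⟩, hpK⟩
          have : dist p.1 (xp k) ≤ δi :=
            (edist_le_ofReal hδpos.le).mp
              ((EMetric.edist_le_diam_of_mem hpK.1 hxpK).trans (hδ k))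
          exact absurd hpN (not_lt.mpr this)
        have hmem : ∀ᵐ p ∂(ν k), p ∉ {p : Euc n × Gr n d | δi < dist p.1 (xp k)} :=
          measure_eq_zero_iff_ae_notMem.mp hNnull
        filter_upwards [hmem] with p hp
        have hd1 : dist p.1 (xp k) ≤ δi := not_lt.mp hp
        have hd2 : ‖φ p - φ q‖ ≤ dist p.1 (xp k) + dist p.2 (Pk k) := by
          rw [Real.norm_eq_abs, ← Real.dist_eq]
          calc dist (φ p) (φ q) ≤ 1 * dist p q := hφlip.dist_le_mul p q
          _ = dist p q := one_mul _
          _ = max (dist p.1 (xp k)) (dist p.2 (Pk k)) := by rw [Prod.dist_eq, hq]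
          _ ≤ dist p.1 (xp k) + dist p.2 (Pk k) :=
              max_le_add_of_nonneg dist_nonneg dist_nonneg
        have hd3 : dist p.2 (Pk k) = ‖Gr.op (Pk k) - Gr.op p.2‖ := by
          rw [Gr.dist_eq, norm_sub_rev]
        calc ENNReal.ofReal ‖φ p - φ q‖
            ≤ ENNReal.ofReal (dist p.1 (xp k) + dist p.2 (Pk k)) :=
              ENNReal.ofReal_le_ofReal hd2
        _ ≤ ENNReal.ofReal (dist p.1 (xp k)) + ENNReal.ofReal (dist p.2 (Pk k)) :=
              ENNReal.ofReal_add_le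
        _ ≤ ENNReal.ofReal δi + ENNReal.ofReal ‖Gr.op (Pk k) - Gr.op p.2‖ := by
              rw [hd3]
              exact add_le_add (ENNReal.ofReal_le_ofReal hd1) le_rfl
      have hlint : (∫⁻ p, ENNReal.ofReal ‖φ p - φ q‖ ∂(ν k)) ≤
          ENNReal.ofReal δi * V (T' ∩ B k) + L k := by
        calc (∫⁻ p, ENNReal.ofReal ‖φ p - φ q‖ ∂(ν k))
            ≤ ∫⁻ p, (ENNReal.ofReal δi + ENNReal.ofReal ‖Gr.op (Pk k) - Gr.op p.2‖) ∂(ν k) :=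
              lintegral_mono_ae hae
        _ = ENNReal.ofReal δi * V (T' ∩ B k) + L k := by
              rw [lintegral_add_left measurable_const, lintegral_const, hνuniv k]
      have hfin : ENNReal.ofReal δi * V (T' ∩ B k) + L k ≠ ⊤ :=
        ENNReal.add_ne_top.mpr
          ⟨ENNReal.mul_ne_top ENNReal.ofReal_ne_top (hfinTB k), hLfin k hk⟩
      have hck : c k = ENNReal.ofReal δi * V (T' ∩ B k) + L k := by
        simp only [hc, if_pos hk]
      calc |a k - b k| = ‖∫ p, (φ p - φ q) ∂(ν k)‖ := by
            rw [key0, Real.norm_eq_abs]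
      _ ≤ (∫⁻ p, ENNReal.ofReal ‖φ p - φ q‖ ∂(ν k)).toReal :=
            norm_integral_le_lintegral_norm _
      _ ≤ (ENNReal.ofReal δi * V (T' ∩ B k) + L k).toReal :=
            ENNReal.toReal_mono hfin hlint
      _ = (c k).toReal := by rw [hck]
    · have hak : a k = 0 := by
        have hnull' : ν k (U ×ˢ (univ : Set (Gr n d))) = 0 := by
          simp only [hν]
          rw [Measure.restrict_apply (hUopen.measurableSet.prod MeasurableSet.univ)]
          rw [← inter_assoc]
          apply hnull k _ ((hUopen.measurableSet.prod MeasurableSet.univ).inter hT'm)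
          rw [eq_empty_iff_forall_notMem]
          rintro p ⟨⟨hpU, hpT⟩, hpK⟩
          exact hk ⟨p.1, hpK.1, hpU.1⟩
        have h0 : ν k {p | φ p ≠ 0} = 0 :=
          measure_mono_null
            (fun p hp => hφsupp (subset_tsupport φ (mem_support.mpr hp))) hnull'
        simp only [ha]
        exact integral_eq_zero_of_ae (ae_iff.mpr (by simpa using h0))
      have hbk0 : b k = 0 := by
        rw [hbeq k]
        rcases eq_empty_or_nonempty (Ki k) with he | hne
        · rw [hVBzero k he]
          simp
        · have hxU : xp k ∉ U := fun hmem => hk ⟨xp k, hxpmem k hne, hmem⟩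
          have hφ0 : φ (xp k, Pk k) = 0 := by
            by_contra hne'
            exact hxU (hφsupp (subset_tsupport φ (mem_support.mpr hne'))).1
          rw [hφ0, mul_zero]
      rw [hak, hbk0]
      simp [hc, if_neg hk]
  -- put it together
  calc |(∫ p, φ p ∂V) - ∫ p, φ p ∂W| = |∑' k, (a k - b k)| := by
        rw [hVμ', htotal.tsum_eq]
  _ ≤ ∑' k, |a k - b k| := by
        simpa [Real.norm_eq_abs] using
          norm_tsum_le_tsum_norm (f := fun k => a k - b k)
            (by simpa [Real.norm_eq_abs] using htotal.summable.abs)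
  _ ≤ ∑' k, (c k).toReal := Summable.tsum_le_tsum hab htotal.summable.abs hsummc
  _ = (∑' k, c k).toReal := (ENNReal.tsum_toReal_eq hcfin).symm
  _ ≤ RHS.toReal := ENNReal.toReal_mono hRne hsumc


lemma BL_zero_zero {n d : ℕ} (U : Set (Euc n)) : BL U (0 : Measure (Euc n × Gr n d)) 0 = 0 := by
  have hset : {r : ℝ | ∃ φ : Euc n × Gr n d → ℝ, LipschitzWith 1 φ ∧ (∀ p, |φ p| ≤ 1) ∧
      tsupport φ ⊆ U ×ˢ (univ : Set (Gr n d)) ∧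
      r = |(∫ p, φ p ∂(0 : Measure (Euc n × Gr n d))) - ∫ p, φ p ∂(0 : Measure (Euc n × Gr n d))|}
      = {0} := by
    ext r
    simp only [mem_setOf_eq, mem_singleton_iff]
    constructor
    · rintro ⟨φ, -, -, -, rfl⟩
      simp
    · rintro rfl
      refine ⟨fun _ => 0, ?_, ?_, ?_, ?_⟩
      · exact (LipschitzWith.const 0).weaken zero_le_one
      · intro p; simp
      · have : tsupport (fun _ : Euc n × Gr n d => (0:ℝ)) = ∅ := by
          simp [tsupport, Function.support]
        rw [this]; exact empty_subset _
      · simp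
  rw [BL, hset, csSup_singleton]


/-- Lemma `lemma:approx-local-estimate`. Given a `d`-varifold `V` in `Ω`
and meshes `𝒦_i` of `Ω` of sizes `δ_i`, there exist discrete (point cloud or volumetric)
varifolds `V_i` built on the meshes such that for every open `U ⊆ Ω`,
`Δ^{1,1}_U(V, V_i) ≤ δ_i ‖V‖(U^{δ_i}) + Σ_K min_P ∫_{(U^{δ_i}∩K)×G} ‖P - S‖ dV`. -/
theorem statement_12 {n d : ℕ} (hd : 1 ≤ d) (hdn : d < n)
    (Ω : Set (Euc n)) (hΩ : IsOpen Ω)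
    (V : Measure (Euc n × Gr n d))
    (hVΩ : V {p : Euc n × Gr n d | p.1 ∉ Ω} = 0)
    (hVloc : IsLocallyFiniteMeasure V)
    {ι : Type} [Countable ι] (K : ℕ → ι → Set (Euc n))
    (hdisj : ∀ i, Pairwise (Function.onFun Disjoint (K i)))
    (hcover : ∀ i, ⋃ k, K i k = Ω)
    (hlocfin : ∀ i, ∀ B : Set (Euc n), Bornology.IsBounded B →
        {k : ι | (K i k ∩ B).Nonempty}.Finite)
    (δ : ℕ → ℝ) (hδnn : ∀ i, 0 ≤ δ i)
    (hδ : ∀ i k, EMetric.diam (K i k) ≤ ENNReal.ofReal (δ i)) :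
    ∃ W : ℕ → Measure (Euc n × Gr n d),
      (∀ i, IsPointCloudOn (K i) (W i) ∨ IsVolumetricOn (K i) (W i)) ∧
      ∀ i : ℕ, ∀ U : Set (Euc n), IsOpen U → U ⊆ Ω →
        ENNReal.ofReal (BL U V (W i))
          ≤ ENNReal.ofReal (δ i) * mass V (Metric.thickening (δ i) U)
            + ∑' k : ι, ⨅ P : Gr n d,
                ∫⁻ p in (Metric.thickening (δ i) U ∩ K i k) ×ˢ (univ : Set (Gr n d)),
                  ENNReal.ofReal ‖Gr.op P - Gr.op p.2‖ ∂V := by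
  classical
  haveI : Nonempty (Gr n d) := gr_nonempty hdn.le
  by_cases hΩe : Ω = ∅
  · have hV0 : V = 0 := by
      apply Measure.measure_univ_eq_zero.mp
      have huniv : {p : Euc n × Gr n d | p.1 ∉ Ω} = univ := by
        ext p; simp [hΩe]
      rw [← huniv]; exact hVΩ
    refine ⟨fun _ => 0, fun i => Or.inl ?_, ?_⟩
    · refine ⟨fun _ => 0, fun _ => 0, fun _ => Classical.arbitrary _, ?_, ?_, ?_⟩
      · intro k hk
        exfalso
        obtain ⟨x, hx⟩ := hk
        have hxΩ : x ∈ Ω := by rw [← hcover i]; exact mem_iUnion.mpr ⟨k, hx⟩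
        rw [hΩe] at hxΩ; exact hxΩ
      · intro k _; rfl
      · ext s hs
        rw [Measure.sum_apply _ hs]
        simp
    · intro i U hU hUΩ
      rw [hV0, BL_zero_zero]
      simp
  · have hn : 0 < n := lt_of_le_of_lt (Nat.zero_le d) hdn
    have hδpos : ∀ i, 0 < δ i := by
      intro i
      rcases lt_or_eq_of_le (hδnn i) with h | h
      · exact h
      · exfalso
        apply not_countable_open hn hΩ (nonempty_iff_ne_empty.mpr hΩe)
        rw [← hcover i]
        apply countable_iUnion
        intro k
        apply Set.Subsingleton.countable
        rw [← EMetric.diam_eq_zero_iff]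
        refine le_antisymm ?_ zero_le
        have := hδ i k
        rwa [← h, ENNReal.ofReal_zero] at this
    have hkey : ∀ i, ∃ W : Measure (Euc n × Gr n d), IsPointCloudOn (K i) W ∧
        ∀ U : Set (Euc n), IsOpen U → U ⊆ Ω →
          ENNReal.ofReal (BL U V W) ≤ ENNReal.ofReal (δ i) * mass V (Metric.thickening (δ i) U)
              + ∑' k : ι, ⨅ P : Gr n d,
                  ∫⁻ p in (Metric.thickening (δ i) U ∩ K i k) ×ˢ (univ : Set (Gr n d)),
                    ENNReal.ofReal ‖Gr.op P - Gr.op p.2‖ ∂V :=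
      fun i => key hdn Ω V hVΩ hVloc (K i) (hcover i) (δ i) (hδpos i) (hδ i)
    choose W hW1 hW2 using hkey
    exact ⟨W, fun i => Or.inl (hW1 i), hW2⟩


end VarifoldPaper
end
end
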